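/- arXiv:1005.4512 — 6 statements merged into one kernel-verified Lean document; each statement's English description precedes it below -/
import Mathlib

section
/- Let g be a finite-dimensional Lie algebra over a field k of characteristic zero and let M be a g-module. Then M is locally finite if and only if for every m ∈ M the g-submodule of M generated by m is finite-dimensional. -/
open Polynomial

section PolyCyclic
variable {k : Type*} [Field k] {M : Type*} [AddCommGroup M] [Module k M]

/-- If `v` is annihilated by a nonzero polynomial in `φ`, then `v` lies in a
finite-dimensional `φ`-invariant subspace. -/
theorem exists_fd_invariant (φ : Module.End k M) (v : M) (f : Polynomial k) (hf : f ≠ 0)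
    (hfv : Polynomial.aeval φ f v = 0) :
    ∃ K : Submodule k M, FiniteDimensional k K ∧ v ∈ K ∧ ∀ w ∈ K, φ w ∈ K := by
  set f' : Polynomial k := f * C f.leadingCoeff⁻¹ with hf'
  have hmon : f'.Monic := monic_mul_leadingCoeff_inv hf
  have hfv' : Polynomial.aeval φ f' v = 0 := by
    rw [hf', map_mul, Module.End.mul_apply, aeval_C, Module.algebraMap_end_apply,
      LinearMap.map_smul, hfv, smul_zero]
  -- the evaluation-at-v linear map
  let ψ : Polynomial k →ₗ[k] M :=
    { toFun := fun p => Polynomial.aeval φ p v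
      map_add' := by intro p q; simp [map_add]
      map_smul' := by intro c p; simp }
  have hψ : ∀ p, ψ p = Polynomial.aeval φ p v := fun _ => rfl
  refine ⟨LinearMap.range ψ, ?_, ⟨1, by simp [hψ]⟩, ?_⟩
  · -- finite dimensional: range ψ = ψ '' (degreeLT)
    have hrange : LinearMap.range ψ = Submodule.map ψ (degreeLT k (f'.natDegree + 1)) := by
      apply le_antisymm
      · rintro w ⟨p, rfl⟩
        refine ⟨p %ₘ f', ?_, ?_⟩
        · rw [SetLike.mem_coe, mem_degreeLT]
          exact lt_of_lt_of_le (degree_modByMonic_lt p hmon)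
            (le_trans degree_le_natDegree (by exact_mod_cast Nat.le_succ _))
        · have := modByMonic_add_div p f'
          conv_rhs => rw [← this]
          rw [hψ, hψ, map_add, mul_comm f' (p /ₘ f'), map_mul, LinearMap.add_apply,
            Module.End.mul_apply, hfv', map_zero, add_zero]
      · rintro w ⟨p, _, rfl⟩; exact ⟨p, rfl⟩
    rw [hrange]
    haveI : Module.Finite k (degreeLT k (f'.natDegree + 1)) :=
      Module.Finite.equiv (degreeLTEquiv k (f'.natDegree + 1)).symm
    exact Module.Finite.map _ ψ
  · rintro w ⟨p, rfl⟩
    refine ⟨X * p, ?_⟩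
    rw [hψ, hψ, map_mul, Module.End.mul_apply, aeval_X]

end PolyCyclic
open Polynomial

section Orb
variable {k : Type*} [Field k] {M : Type*} [AddCommGroup M] [Module k M]

/-- The smallest `φ`-invariant subspace containing `V`. -/
noncomputable def Orb (φ : Module.End k M) (V : Submodule k M) : Submodule k M :=
  ⨆ n : ℕ, V.map (φ ^ n)

theorem le_orb (φ : Module.End k M) (V : Submodule k M) : V ≤ Orb φ V := by
  have h := le_iSup (fun n : ℕ => V.map (φ ^ n)) 0
  rwa [pow_zero, Module.End.one_eq_id, Submodule.map_id] at h

theorem orb_stable (φ : Module.End k M) (V : Submodule k M) :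
    ∀ w ∈ Orb φ V, φ w ∈ Orb φ V := by
  intro w hw
  have : Submodule.map φ (Orb φ V) ≤ Orb φ V := by
    rw [Orb, Submodule.map_iSup]
    refine iSup_le fun n => ?_
    rw [← Submodule.map_comp]
    have : φ.comp (φ ^ n) = φ ^ (n + 1) := by rw [pow_succ']; rfl
    rw [this]
    exact le_iSup (fun n : ℕ => V.map (φ ^ n)) (n + 1)
  exact this ⟨w, hw, rfl⟩

theorem orb_le (φ : Module.End k M) {V W : Submodule k M} (hVW : V ≤ W)
    (hW : ∀ w ∈ W, φ w ∈ W) : Orb φ V ≤ W := by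
  refine iSup_le fun n => ?_
  induction n with
  | zero => rw [pow_zero, Module.End.one_eq_id, Submodule.map_id]; exact hVW
  | succ n ih =>
      rintro w ⟨v, hv, rfl⟩
      have : (φ ^ (n + 1)) v = φ ((φ ^ n) v) := by rw [pow_succ']; rfl
      rw [this]
      exact hW _ (ih ⟨v, hv, rfl⟩)

theorem orb_findim (φ : Module.End k M)
    (hloc : ∀ v : M, ∃ f : Polynomial k, f ≠ 0 ∧ Polynomial.aeval φ f v = 0)
    (V : Submodule k M) [FiniteDimensional k V] : FiniteDimensional k (Orb φ V) := by
  obtain ⟨s, hs⟩ : V.FG := (Submodule.fg_iff_finiteDimensional V).mpr ‹_›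
  choose K hK1 hK2 hK3 using fun v : M =>
    exists_fd_invariant φ v (hloc v).choose (hloc v).choose_spec.1 (hloc v).choose_spec.2
  set W : Submodule k M := s.sup K with hW
  haveI : ∀ v : M, FiniteDimensional k (K v) := hK1
  haveI : FiniteDimensional k W := Submodule.finiteDimensional_finset_sup s K
  have hVW : V ≤ W := by
    rw [← hs, Submodule.span_le]
    intro v hv
    exact Finset.le_sup (f := K) hv (hK2 v)
  have hWs : ∀ w ∈ W, φ w ∈ W := by
    have : Submodule.map φ W ≤ W := by
      rw [hW, Finset.sup_eq_iSup, Submodule.map_iSup]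
      refine iSup_le fun v => ?_
      rw [Submodule.map_iSup]
      refine iSup_le fun hv => ?_
      refine le_iSup₂_of_le v hv ?_
      rintro w ⟨u, hu, rfl⟩
      exact hK3 v u hu
    exact fun w hw => this ⟨w, hw, rfl⟩
  exact Submodule.finiteDimensional_of_le (orb_le φ hVW hWs)

end Orb

section Straighten
variable {k : Type*} [Field k] {M : Type*} [AddCommGroup M] [Module k M] {n : ℕ}

/-- Product of a word of endomorphisms. -/
noncomputable def PP (E : Fin n → Module.End k M) (w : List (Fin n)) : Module.End k M :=
  (w.map E).prod

theorem PP_nil (E : Fin n → Module.End k M) : PP E [] = 1 := rfl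

theorem PP_cons (E : Fin n → Module.End k M) (a : Fin n) (w : List (Fin n)) :
    PP E (a :: w) = E a * PP E w := by simp [PP]

/-- Sorted words of length at most `e + 1`, those of full length `e + 1` having all letters
bounded below by some element of `c`, applied to `m`. -/
def TT (E : Fin n → Module.End k M) (m : M) (e : ℕ) (c : List (Fin n)) : Set M :=
  {v | ∃ w : List (Fin n), w.Pairwise (· ≤ ·) ∧ w.length ≤ e + 1 ∧
    (w.length = e + 1 → ∀ x ∈ w, ∃ y ∈ c, y ≤ x) ∧ PP E w m = v}

theorem TT_le (E : Fin n → Module.End k M) (m : M) (e : ℕ) (c c' : List (Fin n)) :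
    TT E m e c ⊆ TT E m (e + 1) c' := by
  rintro v ⟨w, hw, hlen, _, rfl⟩
  exact ⟨w, hw, hlen.trans (Nat.le_succ _), fun h => absurd h (by omega), rfl⟩

theorem straighten (E : Fin n → Module.End k M)
    (hbr : ∀ i j : Fin n, ∃ c : Fin n → k, E i * E j - E j * E i = ∑ t, c t • E t) (m : M) :
    ∀ (e : ℕ) (j : Fin n) (u : List (Fin n)), u.Pairwise (· ≤ ·) → u.length ≤ e →
      E j (PP E u m) ∈ Submodule.span k (TT E m e (j :: u)) := by
  intro e
  induction e with
  | zero =>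
      intro j u hu hlen
      rw [List.length_eq_zero_iff.mp (Nat.le_zero.mp hlen)]
      refine Submodule.subset_span ⟨[j], List.pairwise_singleton _ j, le_refl 1, ?_, ?_⟩
      · intro _ x hx
        rw [List.mem_singleton] at hx
        exact ⟨j, List.mem_cons_self, le_of_eq hx.symm⟩
      · simp [PP_nil, PP_cons]
  | succ e IH =>
      intro j u hu hlen
      match u with
      | [] =>
          refine Submodule.subset_span ⟨[j], List.pairwise_singleton _ j, by simp, ?_, ?_⟩
          · intro _ x hx
            rw [List.mem_singleton] at hx
            exact ⟨j, List.mem_cons_self, le_of_eq hx.symm⟩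
          · simp [PP_nil, PP_cons]
      | a :: t =>
          have hlt : t.length ≤ e := by simpa using hlen
          obtain ⟨hat, ht⟩ := List.pairwise_cons.mp hu
          by_cases hja : j ≤ a
          · refine Submodule.subset_span ⟨j :: a :: t, ?_, by simpa using hlen, ?_, ?_⟩
            · rw [List.pairwise_cons]
              exact ⟨fun b hb => by
                rcases List.mem_cons.mp hb with h | h
                · exact h ▸ hja
                · exact hja.trans (hat b h), hu⟩
            · intro _ x hx
              exact ⟨x, hx, le_refl x⟩
            · rw [PP_cons]; rfl
          · push_neg at hja  -- a < j
            have key : E j (PP E (a :: t) m) =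
                E a (E j (PP E t m)) + (E j * E a - E a * E j) (PP E t m) := by
              rw [PP_cons]
              simp only [LinearMap.sub_apply, Module.End.mul_apply]
              abel
            rw [key]
            refine Submodule.add_mem _ ?_ ?_
            · -- main term
              have h1 : E j (PP E t m) ∈ Submodule.span k (TT E m e (j :: t)) :=
                IH j t ht hlt
              have h2 : Submodule.map (E a) (Submodule.span k (TT E m e (j :: t))) ≤
                  Submodule.span k (TT E m (e + 1) (j :: a :: t)) := by
                rw [Submodule.map_span, Submodule.span_le]
                rintro _ ⟨v, ⟨w, hw, hwlen, hwtop, rfl⟩, rfl⟩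
                by_cases hweq : w.length = e + 1
                · -- full length: all letters of w are ≥ a
                  have hwa : ∀ x ∈ w, a ≤ x := by
                    intro x hx
                    obtain ⟨y, hy, hyx⟩ := hwtop hweq x hx
                    rcases List.mem_cons.mp hy with h | h
                    · exact (le_of_lt (h ▸ hja)).trans hyx
                    · exact (hat y h).trans hyx
                  refine Submodule.subset_span ⟨a :: w, ?_, by simp [hweq], ?_, ?_⟩
                  · rw [List.pairwise_cons]; exact ⟨hwa, hw⟩
                  · intro _ x hx
                    refine ⟨a, List.mem_cons.mpr (Or.inr (List.mem_cons_self)), ?_⟩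
                    rcases List.mem_cons.mp hx with h | h
                    · exact le_of_eq h.symm
                    · exact hwa x h
                  · rw [PP_cons]; rfl
                · have hwlen' : w.length ≤ e := by omega
                  have := IH a w hw hwlen'
                  exact SetLike.mem_coe.mpr
                    (Submodule.span_mono (TT_le E m e (a :: w) (j :: a :: t)) this)
              exact h2 ⟨_, h1, rfl⟩
            · -- bracket term
              obtain ⟨c, hc⟩ := hbr j a
              rw [hc]
              rw [LinearMap.sum_apply]
              refine Submodule.sum_mem _ fun i _ => ?_
              rw [LinearMap.smul_apply]
              refine Submodule.smul_mem _ _ ?_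
              have := IH i t ht hlt
              exact Submodule.span_mono (TT_le E m e (i :: t) (j :: a :: t)) this

end Straighten

section GG
variable {k : Type*} [Field k] {M : Type*} [AddCommGroup M] [Module k M] {n : ℕ}

/-- Span of sorted words with all letters at least `i`, applied to `m`. -/
noncomputable def GG (E : Fin n → Module.End k M) (m : M) (i : ℕ) : Submodule k M :=
  Submodule.span k
    {v | ∃ w : List (Fin n), w.Pairwise (· ≤ ·) ∧ (∀ a ∈ w, i ≤ (a : ℕ)) ∧ PP E w m = v}

theorem mem_GG (E : Fin n → Module.End k M) (m : M) (i : ℕ) : m ∈ GG E m i :=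
  Submodule.subset_span ⟨[], List.Pairwise.nil, by simp, by simp [PP_nil]⟩

theorem GG_le_span_singleton (E : Fin n → Module.End k M) (m : M) {i : ℕ} (hi : n ≤ i) :
    GG E m i ≤ Submodule.span k {m} := by
  refine Submodule.span_le.mpr ?_
  rintro _ ⟨w, hw, hwi, rfl⟩
  have hwnil : w = [] := by
    cases w with
    | nil => rfl
    | cons a t => exact absurd (hwi a (List.mem_cons_self)) (by omega)
  rw [hwnil]
  simpa [PP_nil] using Submodule.mem_span_singleton_self m

theorem GG_le_orb (E : Fin n → Module.End k M) (m : M) (c : Fin n) :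
    GG E m (c : ℕ) ≤ Orb (E c) (GG E m ((c : ℕ) + 1)) := by
  refine Submodule.span_le.mpr ?_
  rintro _ ⟨w, hw, hwi, rfl⟩
  induction w with
  | nil =>
      simpa [PP_nil] using le_orb (E c) _ (mem_GG E m ((c : ℕ) + 1))
  | cons a t IH =>
      obtain ⟨hat, ht⟩ := List.pairwise_cons.mp hw
      by_cases hac : (a : ℕ) = (c : ℕ)
      · have hac' : a = c := Fin.val_injective hac
        have htmem : PP E t m ∈ Orb (E c) (GG E m ((c : ℕ) + 1)) := by
          refine IH ht fun b hb => ?_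
          exact le_trans (hwi a (List.mem_cons_self)) (hat b hb)
        rw [hac', PP_cons]
        exact orb_stable (E c) _ _ htmem
      · have hac' : (c : ℕ) + 1 ≤ (a : ℕ) :=
          lt_of_le_of_ne (hwi a (List.mem_cons_self)) (Ne.symm hac)
        refine le_orb (E c) _ (Submodule.subset_span ⟨a :: t, hw, ?_, rfl⟩)
        intro b hb
        rcases List.mem_cons.mp hb with h | h
        · exact h ▸ hac'
        · exact le_trans hac' (Fin.le_def.mp (hat b h))

theorem GG_findim (E : Fin n → Module.End k M) (m : M)
    (hE : ∀ (i : Fin n) (v : M), ∃ f : Polynomial k, f ≠ 0 ∧ Polynomial.aeval (E i) f v = 0)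
    (i : ℕ) : FiniteDimensional k (GG E m i) := by
  haveI : FiniteDimensional k (Submodule.span k ({m} : Set M)) :=
    FiniteDimensional.span_of_finite k (Set.finite_singleton m)
  suffices h : ∀ d i, n ≤ i + d → FiniteDimensional k (GG E m i) by
    by_cases hi : n ≤ i
    · exact h 0 i (by omega)
    · exact h (n - i) i (by omega)
  intro d
  induction d with
  | zero =>
      intro i hi
      exact Submodule.finiteDimensional_of_le (GG_le_span_singleton E m (by omega))
  | succ d IH =>
      intro i hi
      by_cases hid : n ≤ i + d
      · exact IH i hid
      · have hin : i < n := by omega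
        set c : Fin n := ⟨i, hin⟩ with hc
        haveI : FiniteDimensional k (GG E m (i + 1)) := IH (i + 1) (by omega)
        haveI : FiniteDimensional k (Orb (E c) (GG E m (i + 1))) :=
          orb_findim (E c) (hE c) _
        exact Submodule.finiteDimensional_of_le (GG_le_orb E m c)

theorem GG_zero_stable (E : Fin n → Module.End k M)
    (hbr : ∀ i j : Fin n, ∃ c : Fin n → k, E i * E j - E j * E i = ∑ t, c t • E t) (m : M)
    (j : Fin n) : ∀ v ∈ GG E m 0, E j v ∈ GG E m 0 := by
  intro v hv
  induction hv using Submodule.span_induction with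
  | mem v hvmem =>
      obtain ⟨w, hw, _, rfl⟩ := hvmem
      have h := straighten E hbr m w.length j w hw le_rfl
      refine Submodule.span_le.mpr ?_ h
      rintro _ ⟨w', hw', _, _, rfl⟩
      exact Submodule.subset_span ⟨w', hw', fun a _ => Nat.zero_le _, rfl⟩
  | zero => simp
  | add x y _ _ hx hy => simpa using Submodule.add_mem _ hx hy
  | smul c x _ hx => simpa using Submodule.smul_mem _ c hx

end GG

/-- A `g`-module `M` over a finite-dimensional Lie algebra `g` (over a field `k` of
characteristic zero) is locally finite (every `x ∈ g` acts on every `m ∈ M` satisfying a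
nonzero polynomial) if and only if every cyclic `g`-submodule of `M` is finite-dimensional. -/
theorem locally_finite_iff_cyclic_submodules_finite_dimensional
    (k : Type*) [Field k] [CharZero k]
    (g : Type*) [LieRing g] [LieAlgebra k g] [Module.Finite k g]
    (M : Type*) [AddCommGroup M] [Module k M] [LieRingModule g M] [LieModule k g M] :
    (∀ (x : g) (m : M), ∃ f : Polynomial k, f ≠ 0 ∧
        (Polynomial.aeval (LieModule.toEnd k g M x) f) m = 0) ↔
      (∀ m : M, FiniteDimensional k (LieSubmodule.lieSpan k g ({m} : Set M))) := by
  constructor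
  · -- locally finite implies cyclic submodules are finite dimensional
    intro h m
    letI : LieRing (Module.End k M) := LieRing.ofAssociativeRing
    obtain ⟨n, xs, hxs⟩ := Module.Finite.exists_fin (R := k) (M := g)
    set T := LieModule.toEnd k g M with hT
    set E : Fin n → Module.End k M := fun i => T (xs i) with hE
    have hbr : ∀ i j : Fin n, ∃ c : Fin n → k, E i * E j - E j * E i = ∑ t, c t • E t := by
      intro i j
      have hmem : ⁅xs i, xs j⁆ ∈ Submodule.span k (Set.range xs) := by
        rw [hxs]; trivial
      obtain ⟨c, hc⟩ := (Submodule.mem_span_range_iff_exists_fun k).mp hmem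
      refine ⟨c, ?_⟩
      have h1 : T ⁅xs i, xs j⁆ = ⁅T (xs i), T (xs j)⁆ := LieHom.map_lie _ _ _
      rw [Ring.lie_def] at h1
      have h2 : T ⁅xs i, xs j⁆ = ∑ t, c t • E t := by
        rw [← hc]
        show T.toLinearMap _ = _
        rw [map_sum]
        exact Finset.sum_congr rfl fun t _ => by rw [LinearMap.map_smul]; rfl
      rw [show E i * E j - E j * E i = T (xs i) * T (xs j) - T (xs j) * T (xs i) from rfl,
        ← h1, h2]
    have hEloc : ∀ (i : Fin n) (v : M), ∃ f : Polynomial k, f ≠ 0 ∧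
        Polynomial.aeval (E i) f v = 0 := fun i v => h (xs i) v
    set S := GG E m 0 with hS
    haveI : FiniteDimensional k S := GG_findim E m hEloc 0
    have hstab : ∀ (y : g) (v : M), v ∈ S → ⁅y, v⁆ ∈ S := by
      intro y v hv
      have hymem : y ∈ Submodule.span k (Set.range xs) := by rw [hxs]; trivial
      obtain ⟨c, hc⟩ := (Submodule.mem_span_range_iff_exists_fun k).mp hymem
      have hTy : ⁅y, v⁆ = T.toLinearMap y v := rfl
      rw [hTy, ← hc, map_sum, LinearMap.sum_apply]
      refine Submodule.sum_mem _ fun i _ => ?_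
      rw [LinearMap.map_smul, LinearMap.smul_apply]
      exact Submodule.smul_mem _ _ (GG_zero_stable E hbr m i v hv)
    let N : LieSubmodule k g M :=
      { toSubmodule := S
        lie_mem := fun {y v} hv => hstab y v hv }
    have hle : LieSubmodule.lieSpan k g ({m} : Set M) ≤ N :=
      LieSubmodule.lieSpan_le.mpr (Set.singleton_subset_iff.mpr (mem_GG E m 0))
    exact Submodule.finiteDimensional_of_le (S₂ := S) hle
  · -- cyclic submodules finite dimensional implies locally finite
    intro h x m
    haveI := h m
    set N := LieSubmodule.lieSpan k g ({m} : Set M) with hN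
    have hm : m ∈ N := LieSubmodule.subset_lieSpan rfl
    set u := LieModule.toEnd k g N x with hu
    haveI : Algebra.IsIntegral k (Module.End k N) := Module.End.isIntegral
    have hint : IsIntegral k u := Algebra.IsIntegral.isIntegral u
    refine ⟨minpoly k u, minpoly.ne_zero hint, ?_⟩
    have key : ∀ p : Polynomial k,
        ((Polynomial.aeval u p ⟨m, hm⟩ : N) : M) =
          Polynomial.aeval (LieModule.toEnd k g M x) p m := by
      intro p
      rw [Polynomial.aeval_eq_sum_range (x := u), Polynomial.aeval_eq_sum_range
        (x := LieModule.toEnd k g M x)]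
      simp only [LinearMap.sum_apply, LinearMap.smul_apply]
      rw [AddSubmonoidClass.coe_finset_sum]
      refine Finset.sum_congr rfl fun i _ => ?_
      rw [SetLike.val_smul, LieSubmodule.coe_toEnd_pow]
    rw [← key, minpoly.aeval]
    simp
end

section
/- Let g be a finite-dimensional Lie algebra over a field k of characteristic zero and let M, N be locally finite g-modules. Then the tensor product M ⊗ N, with the diagonal g-action x·(m ⊗ n) = (x·m) ⊗ n + m ⊗ (x·n), is a locally finite g-module. -/
open TensorProduct Polynomial

/-- If `t` lies in a finite-dimensional `φ`-invariant subspace `W`, then `t` is annihilated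
by a nonzero polynomial in `φ`. -/
lemma ann_of_mem_invariant_findim {k V : Type*} [Field k] [AddCommGroup V] [Module k V]
    (φ : Module.End k V) (W : Submodule k V) [Module.Finite k W]
    (hW : ∀ w ∈ W, φ w ∈ W) {t : V} (ht : t ∈ W) :
    ∃ f : Polynomial k, f ≠ 0 ∧ (Polynomial.aeval φ f) t = 0 := by
  obtain ⟨f, hf, hf0⟩ := LinearMap.exists_monic_and_aeval_eq_zero k (φ.restrict hW)
  refine ⟨f, hf.ne_zero, ?_⟩
  have key : ∀ g : Polynomial k,
      (Polynomial.aeval φ g) t = ((Polynomial.aeval (φ.restrict hW) g) ⟨t, ht⟩ : V) := by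
    intro g
    rw [Polynomial.aeval_eq_sum_range, Polynomial.aeval_eq_sum_range]
    simp only [LinearMap.coe_sum, LinearMap.smul_apply, Finset.sum_apply]
    rw [Submodule.coe_sum]
    refine Finset.sum_congr rfl fun i _ => ?_
    rw [SetLike.val_smul]
    congr 1
    rw [Module.End.pow_restrict, LinearMap.restrict_apply]
  rw [key, hf0]
  simp

/-- The span of the `A`-orbit of a vector annihilated by a nonzero polynomial in `A`
gives a finite-dimensional invariant subspace containing the vector. -/
lemma orbit_span_findim {k V : Type*} [Field k] [AddCommGroup V] [Module k V]
    (A : Module.End k V) (v : V) (f : Polynomial k) (hf : f ≠ 0)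
    (hfv : (Polynomial.aeval A f) v = 0) :
    ∃ W : Submodule k V, Module.Finite k W ∧ v ∈ W ∧ ∀ w ∈ W, A w ∈ W := by
  -- normalize to a monic polynomial
  set f' := f * C f.leadingCoeff⁻¹ with hf'
  have hmonic : f'.Monic := Polynomial.monic_mul_leadingCoeff_inv hf
  have hf'v : (Polynomial.aeval A f') v = 0 := by
    rw [hf', mul_comm, map_mul, Polynomial.aeval_C]
    simp only [Module.End.mul_apply]
    rw [hfv]
    simp [Algebra.algebraMap_eq_smul_one]
  -- the evaluation map
  let θ : Polynomial k →ₗ[k] V := (LinearMap.applyₗ v).comp (Polynomial.aeval A).toLinearMap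
  have hθ : ∀ g : Polynomial k, θ g = (Polynomial.aeval A g) v := fun g => rfl
  set d := f'.natDegree with hd
  set W : Submodule k V := Submodule.map θ (Polynomial.degreeLT k d) with hWdef
  have hrange : ∀ g : Polynomial k, θ g ∈ W := by
    intro g
    have hdecomp : g %ₘ f' + f' * (g /ₘ f') = g := Polynomial.modByMonic_add_div g f'
    have : θ g = θ (g %ₘ f') + θ (f' * (g /ₘ f')) := by rw [← map_add, hdecomp]
    have hzero : θ (f' * (g /ₘ f')) = 0 := by
      rw [hθ, mul_comm, map_mul]
      simp only [Module.End.mul_apply]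
      rw [hf'v, map_zero]
    rw [this, hzero, add_zero]
    refine Submodule.mem_map_of_mem ?_
    rw [Polynomial.mem_degreeLT]
    exact lt_of_lt_of_le (Polynomial.degree_modByMonic_lt g hmonic)
      (Polynomial.degree_le_natDegree)
  have hfin : Module.Finite k (Polynomial.degreeLT k d) :=
    Module.Finite.equiv (Polynomial.degreeLTEquiv k d).symm
  refine ⟨W, Module.Finite.map _ _, ?_, ?_⟩
  · have : v = θ 1 := by rw [hθ]; simp
    rw [this]; exact hrange 1
  · rintro w hw
    rw [hWdef] at hw
    obtain ⟨g, _, rfl⟩ := hw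
    have : A (θ g) = θ (Polynomial.X * g) := by
      rw [hθ, hθ, map_mul]
      simp [Module.End.mul_apply]
    rw [this]
    exact hrange _

/-- The tensor product of two locally finite modules over a finite-dimensional Lie algebra
`g` over a field `k` of characteristic zero, equipped with the diagonal `g`-action
`x·(m ⊗ n) = (x·m) ⊗ n + m ⊗ (x·n)`, is again locally finite. -/
theorem tensorProduct_locally_finite
    (k : Type*) [Field k] [CharZero k]
    (g : Type*) [LieRing g] [LieAlgebra k g] [Module.Finite k g]
    (M : Type*) [AddCommGroup M] [Module k M] [LieRingModule g M] [LieModule k g M]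
    (N : Type*) [AddCommGroup N] [Module k N] [LieRingModule g N] [LieModule k g N]
    (hM : ∀ (x : g) (m : M), ∃ f : Polynomial k, f ≠ 0 ∧
        (Polynomial.aeval (LieModule.toEnd k g M x) f) m = 0)
    (hN : ∀ (x : g) (n : N), ∃ f : Polynomial k, f ≠ 0 ∧
        (Polynomial.aeval (LieModule.toEnd k g N x) f) n = 0) :
    ∀ (x : g) (t : M ⊗[k] N), ∃ f : Polynomial k, f ≠ 0 ∧
        (Polynomial.aeval (LieModule.toEnd k g (M ⊗[k] N) x) f) t = 0 := by
  intro x t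
  set φ := LieModule.toEnd k g (M ⊗[k] N) x with hφ
  induction t using TensorProduct.induction_on with
  | zero => exact ⟨1, one_ne_zero, by simp⟩
  | tmul m n =>
    obtain ⟨fm, hfm, hfm0⟩ := hM x m
    obtain ⟨fn, hfn, hfn0⟩ := hN x n
    obtain ⟨WM, hWMfin, hmWM, hWMinv⟩ :=
      orbit_span_findim (LieModule.toEnd k g M x) m fm hfm hfm0
    obtain ⟨WN, hWNfin, hnWN, hWNinv⟩ :=
      orbit_span_findim (LieModule.toEnd k g N x) n fn hfn hfn0
    let ι : WM ⊗[k] WN →ₗ[k] M ⊗[k] N := TensorProduct.map WM.subtype WN.subtype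
    have hfinWMWN : Module.Finite k (WM ⊗[k] WN) := by
      exact Module.Finite.tensorProduct k WM WN
    have hWfin : Module.Finite k (LinearMap.range ι) := Module.Finite.range ι
    have hinv : ∀ w ∈ LinearMap.range ι, φ w ∈ LinearMap.range ι := by
      rintro w ⟨u, rfl⟩
      induction u using TensorProduct.induction_on with
      | zero => simp
      | tmul a b =>
        have : φ (ι (a ⊗ₜ b)) = ι ((⟨(LieModule.toEnd k g M x) a, hWMinv a a.2⟩ : WM) ⊗ₜ b)
            + ι (a ⊗ₜ (⟨(LieModule.toEnd k g N x) b, hWNinv b b.2⟩ : WN)) := by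
          simp only [ι, TensorProduct.map_tmul, Submodule.coe_subtype]
          rw [hφ]
          rw [LieModule.toEnd_apply_apply]
          rw [TensorProduct.LieModule.lie_tmul_right]
          rfl
        rw [this]
        exact Submodule.add_mem _ (LinearMap.mem_range_self ι _) (LinearMap.mem_range_self ι _)
      | add u v hu hv =>
        rw [map_add, map_add]
        exact Submodule.add_mem _ hu hv
    have ht : m ⊗ₜ[k] n ∈ LinearMap.range ι :=
      ⟨(⟨m, hmWM⟩ : WM) ⊗ₜ (⟨n, hnWN⟩ : WN), rfl⟩
    exact ann_of_mem_invariant_findim φ (LinearMap.range ι) hinv ht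
  | add u v hu hv =>
    obtain ⟨f₁, hf₁, hf₁0⟩ := hu
    obtain ⟨f₂, hf₂, hf₂0⟩ := hv
    refine ⟨f₁ * f₂, mul_ne_zero hf₁ hf₂, ?_⟩
    have h1 : (Polynomial.aeval φ (f₁ * f₂)) u = 0 := by
      rw [mul_comm, map_mul]
      simp only [Module.End.mul_apply]
      rw [hf₁0, map_zero]
    have h2 : (Polynomial.aeval φ (f₁ * f₂)) v = 0 := by
      rw [map_mul]
      simp only [Module.End.mul_apply]
      rw [hf₂0, map_zero]
    rw [map_add, h1, h2, add_zero]
end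

section
/- Let L be an additive abelian group and let α, α′ : L × L → ℂˣ be normalized 2-cocycles whose commutator functions coincide: α(x,y)·α(y,x)⁻¹ = α′(x,y)·α′(y,x)⁻¹ for all x, y ∈ L. Then α and α′ are cohomologous: there exists a function β : L → ℂˣ with β(0) = 1 such that α′(x,y) = α(x,y)·β(x+y)·β(x)⁻¹·β(y)⁻¹ for all x, y ∈ L. -/
noncomputable instance : RootableBy ℂˣ ℕ :=
  rootableByOfPowLeftSurj _ _ (fun {n} hn x => by
    refine ⟨Units.mk0 ((x : ℂ) ^ ((n : ℂ)⁻¹)) ?_, Units.ext ?_⟩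
    · simp [Complex.cpow_eq_zero_iff, x.ne_zero]
    · push_cast
      simp only [Units.val_mk0]
      exact Complex.cpow_nat_inv_pow _ hn)

noncomputable instance : RootableBy ℂˣ ℤ := Group.rootableByIntOfRootableByNat _

noncomputable instance : DivisibleBy (Additive ℂˣ) ℤ where
  div a n := Additive.ofMul (RootableBy.root a.toMul n)
  div_zero a := congrArg Additive.ofMul (RootableBy.root_zero _)
  div_cancel a hn := by
    have h2 := RootableBy.root_cancel (α := ℤ) a.toMul hn
    show (_ : ℤ) • Additive.ofMul _ = a
    rw [← ofMul_zpow, h2]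
    rfl

/-- A symmetric normalized 2-cocycle on an abelian group with values in `ℂˣ` is a
coboundary. -/
theorem symm_cocycle_is_coboundary
    (L : Type*) [AddCommGroup L] (γ : L → L → ℂˣ)
    (hcoc : ∀ x y z : L, γ x y * γ (x + y) z = γ y z * γ x (y + z))
    (hn : ∀ x : L, γ x 0 = 1) (hn' : ∀ y : L, γ 0 y = 1)
    (hsymm : ∀ x y : L, γ x y = γ y x) :
    ∃ β : L → ℂˣ, β 0 = 1 ∧
      ∀ x y : L, γ x y = β (x + y) * (β x)⁻¹ * (β y)⁻¹ := by
  classical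
  -- cocycle identity at the level of `ℂ`
  have hcocC : ∀ x y z : L, (γ x y : ℂ) * γ (x + y) z = γ y z * γ x (y + z) := by
    intro x y z
    have := congrArg Units.val (hcoc x y z)
    simpa using this
  have hsymmC : ∀ x y : L, (γ x y : ℂ) = γ y x := fun x y =>
    congrArg Units.val (hsymm x y)
  have hnC : ∀ x : L, (γ x 0 : ℂ) = 1 := fun x => congrArg Units.val (hn x)
  have hn'C : ∀ y : L, (γ 0 y : ℂ) = 1 := fun y => congrArg Units.val (hn' y)
  -- the extension group structure on `ℂˣ × L`
  letI instE : CommGroup (ℂˣ × L) :=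
    { mul := fun p q => (p.1 * q.1 * γ p.2 q.2, p.2 + q.2)
      one := (1, 0)
      inv := fun p => ((p.1 * γ p.2 (-p.2))⁻¹, -p.2)
      mul_assoc := by
        rintro ⟨a, x⟩ ⟨b, y⟩ ⟨c, z⟩
        refine Prod.ext (Units.ext ?_) (add_assoc x y z)
        show ((a * b * γ x y : ℂˣ) * c * γ (x + y) z : ℂ)
            = (a * (b * c * γ y z) * γ x (y + z) : ℂˣ)
        push_cast
        linear_combination (a : ℂ) * b * c * hcocC x y z
      one_mul := by
        rintro ⟨a, x⟩
        refine Prod.ext (Units.ext ?_) (zero_add x)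
        show ((1 : ℂˣ) * a * γ 0 x : ℂ) = a
        push_cast
        rw [hn'C x]; ring
      mul_one := by
        rintro ⟨a, x⟩
        refine Prod.ext (Units.ext ?_) (add_zero x)
        show ((a : ℂˣ) * 1 * γ x 0 : ℂ) = a
        push_cast
        rw [hnC x]; ring
      inv_mul_cancel := by
        rintro ⟨a, x⟩
        refine Prod.ext (Units.ext ?_) (neg_add_cancel x)
        show (((a * γ x (-x))⁻¹ * a * γ (-x) x : ℂˣ) : ℂ) = ((1 : ℂˣ) : ℂ)
        push_cast
        rw [← hsymmC x (-x)]
        field_simp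
      mul_comm := by
        rintro ⟨a, x⟩ ⟨b, y⟩
        refine Prod.ext (Units.ext ?_) (add_comm x y)
        show ((a * b * γ x y : ℂˣ) : ℂ) = ((b * a * γ y x : ℂˣ) : ℂ)
        push_cast
        rw [hsymmC x y]; ring }
  -- the inclusion `ℂˣ →* ℂˣ × L`
  have hγ00 : γ 0 0 = 1 := hn 0
  let i : ℂˣ →* (ℂˣ × L) :=
    { toFun := fun a => (a, 0)
      map_one' := rfl
      map_mul' := by
        intro a b
        refine (Prod.ext (Units.ext ?_) (add_zero (0 : L))).symm
        show ((a * b * γ 0 0 : ℂˣ) : ℂ) = ((a * b : ℂˣ) : ℂ)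
        rw [hγ00]
        simp }
  have hi_inj : Function.Injective i := by
    intro a b hab
    exact congrArg Prod.fst hab
  -- extend the identity along the inclusion, using divisibility of `ℂˣ`
  obtain ⟨h, hh⟩ := (Module.Baer.of_divisible (Additive ℂˣ)).extension_property_addMonoidHom
    (MonoidHom.toAdditive i) (fun a b hab => by
      have := hi_inj (by exact congrArg Additive.toMul hab)
      exact congrArg Additive.ofMul this)
    (AddMonoidHom.id (Additive ℂˣ))
  have hret : ∀ a : ℂˣ, (h (Additive.ofMul ((a, 0) : ℂˣ × L))).toMul = a := by
    intro a
    have := congrArg (fun f => f (Additive.ofMul a)) congr(⇑$hh)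
    have h2 : h (Additive.ofMul ((a, 0) : ℂˣ × L)) = Additive.ofMul a := by
      simpa [MonoidHom.toAdditive, i] using this
    rw [h2]; rfl
  -- the retraction, multiplicatively
  set r : L → ℂˣ := fun x => (h (Additive.ofMul ((1, x) : ℂˣ × L))).toMul with hr
  have hr_mul : ∀ x y : L, γ x y * r (x + y) = r x * r y := by
    intro x y
    have key : ((1, x) : ℂˣ × L) * (1, y) = ((γ x y, 0) : ℂˣ × L) * (1, x + y) := by
      refine Prod.ext (Units.ext ?_) ?_
      · show ((1 * 1 * γ x y : ℂˣ) : ℂ) = ((γ x y * 1 * γ 0 (x + y) : ℂˣ) : ℂ)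
        push_cast
        rw [hn'C (x + y)]; ring
      · exact (zero_add (x + y)).symm
    have h1 := congrArg (fun p => (h (Additive.ofMul p)).toMul) key
    have hmul : ∀ p q : ℂˣ × L, (h (Additive.ofMul (p * q))).toMul
        = (h (Additive.ofMul p)).toMul * (h (Additive.ofMul q)).toMul := by
      intro p q
      have := h.map_add (Additive.ofMul p) (Additive.ofMul q)
      simpa [← ofMul_mul] using congrArg Additive.toMul this
    rw [hmul, hmul, hret (γ x y)] at h1
    exact h1.symm
  refine ⟨fun x => (r x)⁻¹, ?_, ?_⟩
  · have h00 : ((1, (0 : L)) : ℂˣ × L) = (1 : ℂˣ × L) := rfl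
    simp only [hr, h00]
    rw [ofMul_one, map_zero]
    rfl
  · intro x y
    have := hr_mul x y
    apply Units.ext
    have hC : (γ x y : ℂ) * r (x + y) = r x * r y := by
      have := congrArg Units.val this
      simpa using this
    push_cast
    field_simp
    linear_combination hC

/-- Two normalized 2-cocycles on an abelian group with values in `ℂˣ` whose commutator
functions coincide are cohomologous. -/
theorem cocycles_with_equal_commutator_are_cohomologous
    (L : Type*) [AddCommGroup L]
    (α α' : L → L → ℂˣ)
    (hcoc : ∀ x y z : L, α x y * α (x + y) z = α y z * α x (y + z))
    (hn : ∀ x : L, α x 0 = 1) (hn' : ∀ y : L, α 0 y = 1)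
    (hcoc' : ∀ x y z : L, α' x y * α' (x + y) z = α' y z * α' x (y + z))
    (hm : ∀ x : L, α' x 0 = 1) (hm' : ∀ y : L, α' 0 y = 1)
    (hcomm : ∀ x y : L, α x y * (α y x)⁻¹ = α' x y * (α' y x)⁻¹) :
    ∃ β : L → ℂˣ, β 0 = 1 ∧
      ∀ x y : L, α' x y = α x y * β (x + y) * (β x)⁻¹ * (β y)⁻¹ := by
  set γ : L → L → ℂˣ := fun x y => α' x y * (α x y)⁻¹ with hγ
  have hγcoc : ∀ x y z : L, γ x y * γ (x + y) z = γ y z * γ x (y + z) := by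
    intro x y z
    apply Units.ext
    have h1 := congrArg Units.val (hcoc x y z)
    have h2 := congrArg Units.val (hcoc' x y z)
    push_cast at h1 h2
    simp only [hγ]
    push_cast
    field_simp
    linear_combination ((α y z : ℂ) * (α x (y + z) : ℂ)) * h2 -
      ((α' y z : ℂ) * (α' x (y + z) : ℂ)) * h1
  have hγn : ∀ x : L, γ x 0 = 1 := by intro x; simp [hγ, hn x, hm x]
  have hγn' : ∀ y : L, γ 0 y = 1 := by intro y; simp [hγ, hn' y, hm' y]
  have hγsymm : ∀ x y : L, γ x y = γ y x := by
    intro x y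
    have h1 := hcomm x y
    simp only [hγ]
    -- α x y * (α y x)⁻¹ = α' x y * (α' y x)⁻¹  ⟹  α' x y * (α x y)⁻¹ = α' y x * (α y x)⁻¹
    apply Units.ext
    have h1C := congrArg Units.val h1
    push_cast at h1C
    push_cast
    field_simp at h1C ⊢
    linear_combination -h1C
  obtain ⟨β, hβ0, hβ⟩ := symm_cocycle_is_coboundary L γ hγcoc hγn hγn' hγsymm
  refine ⟨β, hβ0, fun x y => ?_⟩
  have := hβ x y
  simp only [hγ] at this
  apply Units.ext
  have hC := congrArg Units.val this
  push_cast at hC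
  push_cast
  field_simp at hC ⊢
  linear_combination hC
end

section
/- Let L be an additive abelian group and let c : L × L → ℂˣ be a function that is multiplicative in each argument (c(x+x′,y) = c(x,y)c(x′,y) and c(x,y+y′) = c(x,y)c(x,y′)) and satisfies c(x,x) = 1 for all x ∈ L. Then there exists a normalized 2-cocycle α : L × L → ℂˣ such that α(x,y)·α(y,x)⁻¹ = c(x,y) for all x, y ∈ L. -/
noncomputable section CocycleAux

open Finsupp

instance inst_s13 : DivisibleBy (Additive ℂˣ) ℤ where
  div a n :=
    if h : n = 0 then 0
    else Additive.ofMul (Units.mk0 (Complex.exp (Complex.log ((Additive.toMul a : ℂˣ) : ℂ) / n))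
      (Complex.exp_ne_zero _))
  div_zero a := by simp
  div_cancel a h := by
    rw [dif_neg h]
    apply Additive.toMul.injective
    rw [toMul_zsmul, toMul_ofMul]
    ext
    rw [Units.val_zpow_eq_zpow_val, Units.val_mk0, ← Complex.exp_int_mul,
      mul_div_cancel₀ _ (by exact_mod_cast h), Complex.exp_log (Units.ne_zero _)]

/-- Carrier for the auxiliary twisted extension group. -/
structure TwExt (A K : Type*) where
  a : A
  k : K

variable {A K : Type*} [AddCommGroup A] [AddCommGroup K] (B : K → K → A)

/-- The twisted extension group structure on `TwExt A K` determined by a symmetric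
biadditive map `B`. -/
def TwExt.addCommGroup
    (haddl : ∀ k k' l, B (k + k') l = B k l + B k' l)
    (haddr : ∀ k l l', B k (l + l') = B k l + B k l')
    (hsym : ∀ k l, B k l = B l k) : AddCommGroup (TwExt A K) :=
  letI : Add (TwExt A K) := ⟨fun p q => ⟨p.a + q.a + B p.k q.k, p.k + q.k⟩⟩
  letI : Zero (TwExt A K) := ⟨⟨0, 0⟩⟩
  letI : Neg (TwExt A K) := ⟨fun p => ⟨-p.a + B p.k p.k, -p.k⟩⟩
  have hadd : ∀ p q : TwExt A K, p + q = ⟨p.a + q.a + B p.k q.k, p.k + q.k⟩ := fun _ _ => rfl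
  have h0l : ∀ l, B 0 l = 0 := fun l => by
    have := haddl 0 0 l; rwa [add_zero, right_eq_add] at this
  have h0r : ∀ l, B l 0 = 0 := fun l => by
    have := haddr l 0 0; rwa [add_zero, right_eq_add] at this
  have hnl : ∀ k l, B (-k) l = - B k l := fun k l => by
    have h2 := haddl (-k) k l
    rw [neg_add_cancel, h0l] at h2
    exact eq_neg_of_add_eq_zero_left h2.symm
  { add := (· + ·)
    zero := 0
    neg := Neg.neg
    nsmul := nsmulRec
    zsmul := zsmulRec
    add_assoc := by
      intro p q r
      simp only [hadd, TwExt.mk.injEq]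
      refine ⟨?_, add_assoc _ _ _⟩
      rw [haddl, haddr]
      abel
    zero_add := by
      intro p
      simp only [hadd]
      show TwExt.mk (0 + p.a + B 0 p.k) (0 + p.k) = p
      rw [h0l, zero_add, add_zero, zero_add]
    add_zero := by
      intro p
      simp only [hadd]
      show TwExt.mk (p.a + 0 + B p.k 0) (p.k + 0) = p
      rw [h0r, add_zero, add_zero, add_zero]
    neg_add_cancel := by
      intro p
      simp only [hadd]
      show TwExt.mk ((-p.a + B p.k p.k) + p.a + B (-p.k) p.k) (-p.k + p.k) = TwExt.mk 0 0
      rw [hnl, neg_add_cancel, TwExt.mk.injEq]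
      exact ⟨by abel, rfl⟩
    add_comm := by
      intro p q
      simp only [hadd, TwExt.mk.injEq]
      exact ⟨by rw [hsym]; abel, add_comm _ _⟩ }


/-- Every symmetric biadditive map into `Additive ℂˣ` admits a quadratic refinement,
by injectivity (divisibility) of `ℂˣ`. -/
theorem exists_quadratic_refinement {K : Type*} [AddCommGroup K]
    (B : K → K → Additive ℂˣ)
    (haddl : ∀ k k' l, B (k + k') l = B k l + B k' l)
    (haddr : ∀ k l l', B k (l + l') = B k l + B k l')
    (hsym : ∀ k l, B k l = B l k) :
    ∃ φ : K → Additive ℂˣ, ∀ k l, φ (k + l) = φ k + φ l + B k l := by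
  letI instE : AddCommGroup (TwExt (Additive ℂˣ) K) := TwExt.addCommGroup B haddl haddr hsym
  have h0l : ∀ l, B 0 l = 0 := fun l => by
    have := haddl 0 0 l; rwa [add_zero, right_eq_add] at this
  have h0r : ∀ l, B l 0 = 0 := fun l => by
    have := haddr l 0 0; rwa [add_zero, right_eq_add] at this
  have hadd : ∀ p q : TwExt (Additive ℂˣ) K,
      p + q = ⟨p.a + q.a + B p.k q.k, p.k + q.k⟩ := fun _ _ => rfl
  let iA : Additive ℂˣ →+ TwExt (Additive ℂˣ) K :=
    AddMonoidHom.mk' (fun a => ⟨a, 0⟩) (fun a b => by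
      rw [hadd]
      show TwExt.mk (a + b) 0 = TwExt.mk (a + b + B 0 0) (0 + 0)
      rw [h0l, add_zero, add_zero])
  have hiA : Function.Injective iA := fun a b h => congrArg TwExt.a h
  obtain ⟨r, hr⟩ := (Module.Baer.of_divisible (Additive ℂˣ)).extension_property_addMonoidHom
      iA hiA (AddMonoidHom.id _)
  have hrA : ∀ a, r ⟨a, 0⟩ = a := fun a => DFunLike.congr_fun hr a
  refine ⟨fun k => - r ⟨0, k⟩, fun k l => ?_⟩
  have h1 : (⟨0, k⟩ : TwExt (Additive ℂˣ) K) + ⟨0, l⟩ = ⟨B k l, k + l⟩ := by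
    rw [hadd]
    show TwExt.mk (0 + 0 + B k l) (k + l) = _
    rw [zero_add, zero_add]
  have h2 : (⟨B k l, (0 : K)⟩ : TwExt (Additive ℂˣ) K) + ⟨0, k + l⟩
      = ⟨B k l, k + l⟩ := by
    rw [hadd]
    show TwExt.mk (B k l + 0 + B 0 (k + l)) (0 + (k + l)) = _
    rw [h0l, add_zero, add_zero, zero_add]
  have h3 := congrArg r (h1.trans h2.symm)
  rw [map_add, map_add, hrA] at h3
  have h4 : r ⟨0, k + l⟩ = r ⟨0, k⟩ + r ⟨0, l⟩ - B k l := by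
    rw [eq_sub_iff_add_eq, add_comm]
    exact h3.symm
  show - r ⟨0, k + l⟩ = - r ⟨0, k⟩ + - r ⟨0, l⟩ + B k l
  rw [h4]; abel


end CocycleAux

/-- Every alternating bimultiplicative function `c : L × L → ℂˣ` on an abelian group `L` is
the commutator function of some normalized 2-cocycle `α`. -/
theorem bimultiplicative_alternating_is_commutator_of_cocycle
    (L : Type*) [AddCommGroup L]
    (c : L → L → ℂˣ)
    (hmull : ∀ x x' y : L, c (x + x') y = c x y * c x' y)
    (hmulr : ∀ x y y' : L, c x (y + y') = c x y * c x y')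
    (hdiag : ∀ x : L, c x x = 1) :
    ∃ α : L → L → ℂˣ,
      (∀ x y z : L, α x y * α (x + y) z = α y z * α x (y + z)) ∧
      (∀ x : L, α x 0 = 1) ∧ (∀ y : L, α 0 y = 1) ∧
      (∀ x y : L, α x y * (α y x)⁻¹ = c x y) := by
  classical
  letI : LinearOrder L := IsWellOrder.linearOrder WellOrderingRel
  -- basic consequences of bimultiplicativity
  have hc0l : ∀ y : L, c 0 y = 1 := fun y => by
    have h := hmull 0 0 y; rw [add_zero] at h; exact (left_eq_mul.mp h)
  have hc0r : ∀ x : L, c x 0 = 1 := fun x => by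
    have h := hmulr x 0 0; rw [add_zero] at h; exact (left_eq_mul.mp h)
  have hskew : ∀ x y : L, c y x = (c x y)⁻¹ := fun x y => by
    have h := hdiag (x + y)
    rw [hmull, hmulr, hmulr, hdiag, hdiag, one_mul, mul_one] at h
    exact eq_inv_of_mul_eq_one_right h
  -- the bilinear "half" of c on the free cover
  let d : L → L → ℂˣ := fun x y => if y < x then c x y else 1
  let B : (L →₀ ℤ) →ₗ[ℤ] (L →₀ ℤ) →ₗ[ℤ] Additive ℂˣ :=
    Finsupp.lift _ ℤ L fun x => Finsupp.lift (Additive ℂˣ) ℤ L fun y => Additive.ofMul (d x y)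
  let π : (L →₀ ℤ) →ₗ[ℤ] L := Finsupp.linearCombination ℤ id
  have hπ : ∀ x : L, π (Finsupp.single x 1) = x := fun x => by
    simp [π, Finsupp.linearCombination_single]
  have hBsingle : ∀ (x y : L) (m n : ℤ),
      B (Finsupp.single x m) (Finsupp.single y n) = (m * n) • Additive.ofMul (d x y) := by
    intro x y m n
    simp [B, Finsupp.lift_apply, Finsupp.sum_single_index, mul_smul]
  -- pointwise skew-symmetrization of d
  have hd : ∀ x y : L, Additive.ofMul (d x y) - Additive.ofMul (d y x) = Additive.ofMul (c x y) := by
    intro x y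
    rcases lt_trichotomy x y with h | h | h
    · have h1 : ¬ y < x := not_lt.mpr h.le
      simp only [d, if_neg h1, if_pos h, ofMul_one, zero_sub, hskew x y, ofMul_inv, neg_neg]
    · subst h
      simp [d, hdiag]
    · have h1 : ¬ x < y := not_lt.mpr h.le
      simp [d, if_pos h, if_neg h1]
  -- the universal commutator identity for B
  -- c as a bilinear (additive) map on L
  let cadd : L → L →+ Additive ℂˣ := fun x =>
    AddMonoidHom.mk' (fun y => Additive.ofMul (c x y)) (fun y y' => by
      show Additive.ofMul (c x (y + y')) = _
      rw [hmulr]; rfl)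
  let cL : L →ₗ[ℤ] L →ₗ[ℤ] Additive ℂˣ :=
    (AddMonoidHom.mk' (fun x => (cadd x).toIntLinearMap) (fun x x' => by
      ext y : 1
      show Additive.ofMul (c (x + x') y) = Additive.ofMul (c x y) + Additive.ofMul (c x' y)
      rw [hmull]; rfl)).toIntLinearMap
  have hBc : ∀ u v, B u v - B v u = Additive.ofMul (c (π u) (π v)) := by
    have hkey : B - B.flip = (cL.comp π).compl₂ π := by
      apply Finsupp.lhom_ext
      intro x m
      apply Finsupp.lhom_ext
      intro y n
      have hL : (B - B.flip) (Finsupp.single x m) (Finsupp.single y n)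
          = (m * n) • (Additive.ofMul (d x y) - Additive.ofMul (d y x)) := by
        simp only [LinearMap.sub_apply, LinearMap.flip_apply, hBsingle, smul_sub]
        rw [mul_comm n m]
        exact (smul_sub (m * n) (Additive.ofMul (d x y)) (Additive.ofMul (d y x))).symm
      have hR : ((cL.comp π).compl₂ π) (Finsupp.single x m) (Finsupp.single y n)
          = (m * n) • Additive.ofMul (c x y) := by
        have h1 : π (Finsupp.single x m) = m • x := by
          simp [π, Finsupp.linearCombination_single]
        have h2 : π (Finsupp.single y n) = n • y := by
          simp [π, Finsupp.linearCombination_single]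
        simp only [LinearMap.compl₂_apply, LinearMap.comp_apply, h1, h2, map_smul,
          LinearMap.smul_apply, mul_smul]
        rw [smul_comm n m]
        show m • n • Additive.ofMul (c x y) = _
        rfl
      rw [hL, hR, hd]
    intro u v
    have h := DFunLike.congr_fun (DFunLike.congr_fun hkey u) v
    simp only [LinearMap.sub_apply, LinearMap.flip_apply, LinearMap.compl₂_apply,
      LinearMap.comp_apply] at h
    exact h
  -- kernel of π
  have hsymK : ∀ (k v : L →₀ ℤ), π k = 0 → B k v = B v k := by
    intro k v hk
    have h := hBc k v
    rw [hk, hc0l, ofMul_one] at h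
    exact sub_eq_zero.mp h
  set K := LinearMap.ker π with hK
  have hsymK' : ∀ (k : ↥K) (v : L →₀ ℤ), B ↑k v = B v ↑k := fun k v =>
    hsymK ↑k v (LinearMap.mem_ker.mp k.2)
  obtain ⟨φ, hφ⟩ := exists_quadratic_refinement (fun k l : ↥K => B ↑k ↑l)
    (fun k k' l => by
      show B ↑(k + k') ↑l = B ↑k ↑l + B ↑k' ↑l
      rw [Submodule.coe_add, map_add, LinearMap.add_apply])
    (fun k l l' => by
      show B ↑k ↑(l + l') = B ↑k ↑l + B ↑k ↑l'
      rw [Submodule.coe_add, map_add])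
    (fun k l => hsymK' k ↑l)
  -- generators
  let ee : L → (L →₀ ℤ) := fun x => Finsupp.single x 1
  have hgmem : ∀ x y : L, ee x + ee y - ee (x + y) ∈ K := by
    intro x y
    rw [hK, LinearMap.mem_ker, map_sub, map_add, hπ, hπ, hπ]
    abel
  let g : L → L → ↥K := fun x y => ⟨ee x + ee y - ee (x + y), hgmem x y⟩
  have he0mem : ee 0 ∈ K := by rw [hK, LinearMap.mem_ker]; exact hπ 0
  let e0 : ↥K := ⟨ee 0, he0mem⟩
  let aα : L → L → Additive ℂˣ := fun x y =>
    B (ee x) (ee y) - B (ee (x + y)) ↑(g x y) - φ (g x y) + φ e0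
  have hg : ∀ x y : L, (↑(g x y) : L →₀ ℤ) = ee x + ee y - ee (x + y) := fun x y => rfl
  have hgcoc : ∀ x y z : L, g x y + g (x + y) z = g y z + g x (y + z) := by
    intro x y z
    apply Subtype.ext
    rw [Submodule.coe_add, Submodule.coe_add, hg, hg, hg, hg, ← add_assoc x y z]
    abel
  have hcoc : ∀ x y z : L, aα x y + aα (x + y) z = aα y z + aα x (y + z) := by
    intro x y z
    have hW : ee (x + (y + z)) = ee (x + y + z) := by rw [add_assoc]
    have hk1 : (↑(g x y) : L →₀ ℤ) = ee x + ee y - ee (x + y) := rfl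
    have hk2 : (↑(g (x + y) z) : L →₀ ℤ) = ee (x + y) + ee z - ee (x + y + z) := rfl
    have hk3 : (↑(g y z) : L →₀ ℤ) = ee y + ee z - ee (y + z) := rfl
    have hk4 : (↑(g x (y + z)) : L →₀ ℤ) = ee x + ee (y + z) - ee (x + y + z) := by
      rw [hg, hW]
    have hφeq : φ (g x y) + φ (g (x + y) z) + B ↑(g x y) ↑(g (x + y) z)
        = φ (g y z) + φ (g x (y + z)) + B ↑(g y z) ↑(g x (y + z)) := by
      have h1 := hφ (g x y) (g (x + y) z)
      rw [hgcoc x y z] at h1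
      exact h1.symm.trans (hφ (g y z) (g x (y + z)))
    have hBid : B (ee x) (ee y) - B (ee (x + y)) ↑(g x y)
          + (B (ee (x + y)) (ee z) - B (ee (x + y + z)) ↑(g (x + y) z))
          + B ↑(g x y) ↑(g (x + y) z)
        = B (ee y) (ee z) - B (ee (y + z)) ↑(g y z)
          + (B (ee x) (ee (y + z)) - B (ee (x + y + z)) ↑(g x (y + z)))
          + B ↑(g y z) ↑(g x (y + z)) := by
      rw [← hsymK' (g x y) (ee (x + y)), ← hsymK' (g (x + y) z) (ee (x + y + z)),
          ← hsymK' (g y z) (ee (y + z)), ← hsymK' (g x (y + z)) (ee (x + y + z))]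
      rw [hk1, hk2, hk3, hk4]
      simp only [map_add, map_sub, LinearMap.add_apply, LinearMap.sub_apply]
      have f1 : B (ee y) (ee x) = B (ee x) (ee y) + Additive.ofMul (c y x) := by
        have h := hBc (ee y) (ee x); rw [hπ, hπ] at h; exact (sub_eq_iff_eq_add'.mp h)
      have f2 : B (ee z) (ee x) = B (ee x) (ee z) + Additive.ofMul (c z x) := by
        have h := hBc (ee z) (ee x); rw [hπ, hπ] at h; exact (sub_eq_iff_eq_add'.mp h)
      have f3 : B (ee x) (ee (y + z)) = B (ee (y + z)) (ee x) + Additive.ofMul (c x (y + z)) := by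
        have h := hBc (ee x) (ee (y + z)); rw [hπ, hπ] at h; exact (sub_eq_iff_eq_add'.mp h)
      have hcxq : Additive.ofMul (c x (y + z))
          = - Additive.ofMul (c y x) - Additive.ofMul (c z x) := by
        rw [hmulr x y z, hskew y x, hskew z x, ofMul_mul, ofMul_inv, ofMul_inv]
        abel
      rw [f1, f2, f3, hcxq]
      abel
    show (B (ee x) (ee y) - B (ee (x + y)) ↑(g x y) - φ (g x y) + φ e0)
        + (B (ee (x + y)) (ee z) - B (ee (x + y + z)) ↑(g (x + y) z) - φ (g (x + y) z) + φ e0)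
        = (B (ee y) (ee z) - B (ee (y + z)) ↑(g y z) - φ (g y z) + φ e0)
        + (B (ee x) (ee (y + z)) - B (ee (x + (y + z))) ↑(g x (y + z)) - φ (g x (y + z)) + φ e0)
    rw [hW]
    calc (B (ee x) (ee y) - B (ee (x + y)) ↑(g x y) - φ (g x y) + φ e0)
          + (B (ee (x + y)) (ee z) - B (ee (x + y + z)) ↑(g (x + y) z) - φ (g (x + y) z) + φ e0)
        = (B (ee x) (ee y) - B (ee (x + y)) ↑(g x y)
            + (B (ee (x + y)) (ee z) - B (ee (x + y + z)) ↑(g (x + y) z))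
            + B ↑(g x y) ↑(g (x + y) z))
          - (φ (g x y) + φ (g (x + y) z) + B ↑(g x y) ↑(g (x + y) z)) + (φ e0 + φ e0) := by
          abel
      _ = (B (ee y) (ee z) - B (ee (y + z)) ↑(g y z)
            + (B (ee x) (ee (y + z)) - B (ee (x + y + z)) ↑(g x (y + z)))
            + B ↑(g y z) ↑(g x (y + z)))
          - (φ (g y z) + φ (g x (y + z)) + B ↑(g y z) ↑(g x (y + z))) + (φ e0 + φ e0) := by
          rw [hBid, hφeq]
      _ = (B (ee y) (ee z) - B (ee (y + z)) ↑(g y z) - φ (g y z) + φ e0)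
          + (B (ee x) (ee (y + z)) - B (ee (x + y + z)) ↑(g x (y + z)) - φ (g x (y + z)) + φ e0) := by
          abel
  refine ⟨fun x y => Additive.toMul (aα x y), ?_, ?_, ?_, ?_⟩
  · intro x y z
    have h := congrArg Additive.toMul (hcoc x y z)
    simpa only [toMul_add] using h
  · intro x
    have hgx0 : g x 0 = e0 := Subtype.ext (by rw [hg, add_zero x]; abel)
    have h : aα x 0 = 0 := by
      show B (ee x) (ee 0) - B (ee (x + 0)) ↑(g x 0) - φ (g x 0) + φ e0 = 0
      rw [hgx0, add_zero x]
      show B (ee x) (ee 0) - B (ee x) (ee 0) - φ e0 + φ e0 = 0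
      abel
    simpa using congrArg Additive.toMul h
  · intro y
    have hg0y : g 0 y = e0 := Subtype.ext (by rw [hg, zero_add y]; abel)
    have h : aα 0 y = 0 := by
      show B (ee 0) (ee y) - B (ee (0 + y)) ↑(g 0 y) - φ (g 0 y) + φ e0 = 0
      rw [hg0y, zero_add y]
      show B (ee 0) (ee y) - B (ee y) (ee 0) - φ e0 + φ e0 = 0
      have h2 := hBc (ee 0) (ee y)
      rw [hπ, hπ, hc0l, ofMul_one] at h2
      rw [sub_eq_zero.mp h2]
      abel
    simpa using congrArg Additive.toMul h
  · intro x y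
    have hgyx : g y x = g x y := Subtype.ext (by rw [hg, hg, add_comm y x]; abel)
    have h : aα x y - aα y x = Additive.ofMul (c x y) := by
      show (B (ee x) (ee y) - B (ee (x + y)) ↑(g x y) - φ (g x y) + φ e0)
          - (B (ee y) (ee x) - B (ee (y + x)) ↑(g y x) - φ (g y x) + φ e0)
          = Additive.ofMul (c x y)
      rw [hgyx, add_comm y x]
      have h2 := hBc (ee x) (ee y)
      rw [hπ, hπ] at h2
      rw [← h2]
      abel
    have h' := congrArg Additive.toMul h
    simpa only [toMul_sub, div_eq_mul_inv, toMul_ofMul] using h'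
end

section
/- Let V be a finite-dimensional complex vector space and T ∈ End(V). Then exp(2πi·T) = id_V if and only if T is diagonalizable and every eigenvalue of T is an integer. -/
open Matrix

section Aux

variable {n : ℕ}

private lemma aux_exp_mulVec (A : Matrix (Fin n) (Fin n) ℂ) (v : Fin n → ℂ) (μ : ℂ)
    (hv : A *ᵥ v = μ • v) : (NormedSpace.exp A) *ᵥ v = Complex.exp μ • v := by
  letI : SeminormedRing (Matrix (Fin n) (Fin n) ℂ) := Matrix.linftyOpSemiNormedRing
  letI : NormedRing (Matrix (Fin n) (Fin n) ℂ) := Matrix.linftyOpNormedRing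
  letI : NormedAlgebra ℂ (Matrix (Fin n) (Fin n) ℂ) := Matrix.linftyOpNormedAlgebra
  have hpow : ∀ k : ℕ, (A ^ k) *ᵥ v = (μ ^ k) • v := by
    intro k
    induction k with
    | zero => simp
    | succ k ih =>
        rw [pow_succ', pow_succ', ← Matrix.mulVec_mulVec, ih, Matrix.mulVec_smul, hv,
          smul_smul, mul_comm]
  let L : Matrix (Fin n) (Fin n) ℂ →ₗ[ℂ] (Fin n → ℂ) :=
    { toFun := fun M => M *ᵥ v
      map_add' := fun M N => Matrix.add_mulVec M N v
      map_smul' := fun c M => Matrix.smul_mulVec c M v }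
  have hL : Continuous L := LinearMap.continuous_of_finiteDimensional L
  have hsum : Summable fun k : ℕ => ((Nat.factorial k : ℂ))⁻¹ • A ^ k :=
    NormedSpace.expSeries_summable' A
  calc (NormedSpace.exp A) *ᵥ v
      = L (∑' k : ℕ, ((Nat.factorial k : ℂ))⁻¹ • A ^ k) := by
        rw [NormedSpace.exp_eq_tsum ℂ]; rfl
    _ = ∑' k : ℕ, L (((Nat.factorial k : ℂ))⁻¹ • A ^ k) := by
        exact (hsum.hasSum.map L hL).tsum_eq.symm
    _ = ∑' k : ℕ, (((Nat.factorial k : ℂ))⁻¹ * μ ^ k) • v := by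
        congr 1; funext k
        show (((Nat.factorial k : ℂ))⁻¹ • A ^ k) *ᵥ v = _
        rw [Matrix.smul_mulVec, hpow k, smul_smul]
    _ = (∑' k : ℕ, ((Nat.factorial k : ℂ))⁻¹ * μ ^ k) • v := by
        refine Summable.tsum_smul_const ?_ v
        simpa [smul_eq_mul] using NormedSpace.expSeries_summable' (𝕂 := ℂ) μ
    _ = Complex.exp μ • v := by
        congr 1
        rw [Complex.exp_eq_exp_ℂ, NormedSpace.exp_eq_tsum ℂ]
        simp [smul_eq_mul]

private lemma aux_exp_eq_sum (M : Matrix (Fin n) (Fin n) ℂ) {m : ℕ} (hm : M ^ m = 0) :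
    NormedSpace.exp M = ∑ k ∈ Finset.range m, ((Nat.factorial k : ℂ))⁻¹ • M ^ k := by
  rw [NormedSpace.exp_eq_tsum ℂ]
  refine tsum_eq_sum fun k hk => ?_
  rw [Finset.mem_range, not_lt] at hk
  rw [pow_eq_zero_of_le hk hm, smul_zero]

private lemma aux_exp_sub_one_isNilpotent (M : Matrix (Fin n) (Fin n) ℂ) (hM : IsNilpotent M) :
    IsNilpotent (NormedSpace.exp M - 1) := by
  obtain ⟨m, hm⟩ := hM
  rw [aux_exp_eq_sum M hm]
  cases m with
  | zero =>
      have h1 : (1 : Matrix (Fin n) (Fin n) ℂ) = 0 := by simpa using hm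
      simp [h1]
  | succ p =>
      rw [Finset.sum_range_succ']
      simp only [pow_zero, Nat.factorial_zero, Nat.cast_one, inv_one, one_smul,
        add_sub_cancel_right]
      refine Commute.isNilpotent_sum (fun k _ => ?_) (fun i j _ _ => ?_)
      · exact (IsNilpotent.pow_succ k ⟨p + 1, hm⟩).smul _
      · exact ((Commute.pow_pow_self M _ _).smul_left _).smul_right _

private lemma aux_nilpotent_exp_eq_one (M : Matrix (Fin n) (Fin n) ℂ) (hM : IsNilpotent M)
    (h : NormedSpace.exp M = 1) : M = 0 := by
  obtain ⟨m, hm⟩ := hM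
  suffices H : ∀ m, M ^ m = 0 → M = 0 from H m hm
  clear hm
  intro m
  induction m with
  | zero =>
      intro hm
      have h1 : (1 : Matrix (Fin n) (Fin n) ℂ) = 0 := by simpa using hm
      calc M = M * 1 := (mul_one M).symm
        _ = M * 0 := by rw [h1]
        _ = 0 := mul_zero M
  | succ m ih =>
      intro hm
      cases m with
      | zero => simpa using hm
      | succ p =>
          apply ih
          have hsum : (∑ k ∈ Finset.range (p + 1),
              ((Nat.factorial (k + 1) : ℂ))⁻¹ • M ^ (k + 1)) = 0 := by
            have := (aux_exp_eq_sum M hm).symm.trans h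
            rw [Finset.sum_range_succ'] at this
            simpa using this
          have hmul := congrArg (· * M ^ p) hsum
          simp only [Finset.sum_mul, zero_mul, smul_mul_assoc, ← pow_add] at hmul
          rw [Finset.sum_eq_single_of_mem 0 (Finset.mem_range.mpr (Nat.succ_pos p))
            (fun k _ hk => ?_)] at hmul
          · simpa [add_comm] using hmul
          · have hle : p + 2 ≤ k + 1 + p := by omega
            rw [pow_eq_zero_of_le hle hm, smul_zero]

private lemma aux_eigenbasis (f : Module.End ℂ (Fin n → ℂ)) (hf : f.IsSemisimple) :
    ∃ (b : Module.Basis (Fin n) ℂ (Fin n → ℂ)) (d : Fin n → ℂ), ∀ i, f (b i) = d i • b i := by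
  have h1 : ∀ μ, f.maxGenEigenspace μ = f.eigenspace μ :=
    hf.isFinitelySemisimple.maxGenEigenspace_eq_eigenspace
  have htop : ⨆ μ, f.eigenspace μ = ⊤ := by
    have := Module.End.iSup_maxGenEigenspace_eq_top f
    simpa [h1] using this
  have hInt : DirectSum.IsInternal (fun μ : ℂ => f.eigenspace μ) :=
    DirectSum.isInternal_submodule_of_iSupIndep_of_iSup_eq_top f.eigenspaces_iSupIndep htop
  let v : ∀ μ : ℂ, Module.Basis (Fin (Module.finrank ℂ (f.eigenspace μ))) ℂ (f.eigenspace μ) :=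
    fun μ => Module.finBasis ℂ _
  let b0 := hInt.collectedBasis v
  let e := b0.indexEquiv (Pi.basisFun ℂ (Fin n))
  refine ⟨b0.reindex e, fun i => (e.symm i).1, fun i => ?_⟩
  rw [Module.Basis.reindex_apply]
  have := hInt.collectedBasis_mem v (e.symm i)
  rwa [Module.End.mem_eigenspace_iff] at this

private lemma aux_toMatrix_diagonal (f : Module.End ℂ (Fin n → ℂ))
    (b : Module.Basis (Fin n) ℂ (Fin n → ℂ)) (d : Fin n → ℂ) (h : ∀ i, f (b i) = d i • b i) :
    LinearMap.toMatrix b b f = Matrix.diagonal d := by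
  ext i j
  rw [LinearMap.toMatrix_apply, h j, _root_.map_smul, Module.Basis.repr_self]
  rw [Matrix.diagonal_apply]
  simp only [Finsupp.smul_single, smul_eq_mul, mul_one, Finsupp.single_apply]
  by_cases hij : i = j <;> simp [hij, eq_comm]

private lemma aux_conj (T : Matrix (Fin n) (Fin n) ℂ) (b : Module.Basis (Fin n) ℂ (Fin n → ℂ))
    (d : Fin n → ℂ) (h : ∀ i, T.mulVecLin (b i) = d i • b i) :
    ∃ P : (Matrix (Fin n) (Fin n) ℂ)ˣ,
      T = (P : Matrix (Fin n) (Fin n) ℂ) * Matrix.diagonal d *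
        ((P⁻¹ : (Matrix (Fin n) (Fin n) ℂ)ˣ) : Matrix (Fin n) (Fin n) ℂ) := by
  classical
  let s : Module.Basis (Fin n) ℂ (Fin n → ℂ) := Pi.basisFun ℂ (Fin n)
  have hT : LinearMap.toMatrix s s (T.mulVecLin) = T := by
    rw [show s = Pi.basisFun ℂ (Fin n) from rfl, LinearMap.toMatrix_eq_toMatrix',
      ← Matrix.toLin'_apply', LinearMap.toMatrix'_toLin']
  have key := basis_toMatrix_mul_linearMap_toMatrix_mul_basis_toMatrix
    (b := s) (b' := b) (c := s) (c' := b) (f := T.mulVecLin)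
  rw [aux_toMatrix_diagonal _ b d h, hT] at key
  refine ⟨⟨s.toMatrix b, b.toMatrix s, ?_, ?_⟩, key.symm⟩
  · exact Module.Basis.toMatrix_mul_toMatrix_flip s b
  · exact Module.Basis.toMatrix_mul_toMatrix_flip b s

private lemma aux_diag_nilpotent (d : Fin n → ℂ) (h : IsNilpotent (Matrix.diagonal d)) :
    ∀ i, d i = 0 := by
  intro i
  obtain ⟨k, hk⟩ := h
  rw [Matrix.diagonal_pow] at hk
  have h2 : d i ^ k = 0 := by
    have := congrFun (congrFun hk i) i
    simpa using this
  exact pow_eq_zero_iff'.mp h2 |>.1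

private lemma aux_conj_nilpotent (P : (Matrix (Fin n) (Fin n) ℂ)ˣ)
    (X : Matrix (Fin n) (Fin n) ℂ) (h : IsNilpotent X) :
    IsNilpotent ((P⁻¹ : (Matrix (Fin n) (Fin n) ℂ)ˣ) * X * P) := by
  obtain ⟨k, hk⟩ := h
  exact ⟨k, by rw [Units.conj_pow', hk, mul_zero, zero_mul]⟩

/-- exp of a conjugated, integer-scaled diagonal. -/
private lemma aux_exp_conj_diag (c : ℂ) (P : (Matrix (Fin n) (Fin n) ℂ)ˣ) (d : Fin n → ℂ) :
    NormedSpace.exp (c • ((P : Matrix (Fin n) (Fin n) ℂ) * Matrix.diagonal d *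
        ((P⁻¹ : (Matrix (Fin n) (Fin n) ℂ)ˣ) : Matrix (Fin n) (Fin n) ℂ))) =
      (P : Matrix (Fin n) (Fin n) ℂ) * Matrix.diagonal (fun i => Complex.exp (c * d i)) *
        ((P⁻¹ : (Matrix (Fin n) (Fin n) ℂ)ˣ) : Matrix (Fin n) (Fin n) ℂ) := by
  have h1 : c • ((P : Matrix (Fin n) (Fin n) ℂ) * Matrix.diagonal d *
      ((P⁻¹ : (Matrix (Fin n) (Fin n) ℂ)ˣ) : Matrix (Fin n) (Fin n) ℂ)) =
      (P : Matrix (Fin n) (Fin n) ℂ) * Matrix.diagonal (c • d) *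
      ((P⁻¹ : (Matrix (Fin n) (Fin n) ℂ)ˣ) : Matrix (Fin n) (Fin n) ℂ) := by
    simp only [Matrix.diagonal_smul, mul_smul_comm, smul_mul_assoc]
  rw [h1, Matrix.exp_units_conj, Matrix.exp_diagonal]
  have h2 : NormedSpace.exp (c • d) = fun i => Complex.exp (c * d i) := by
    funext i
    rw [Pi.coe_exp, Complex.exp_eq_exp_ℂ]
    simp [smul_eq_mul]
  rw [h2]

end Aux

/-- For a complex matrix `T` (an endomorphism of the finite-dimensional complex vector space
`Fin n → ℂ`), `exp(2πi·T) = 1` if and only if `T` is diagonalizable (i.e. semisimple as an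
endomorphism) and every eigenvalue of `T` is an integer. -/
theorem exp_two_pi_I_eq_one_iff_semisimple_integer_eigenvalues
    (n : ℕ) (T : Matrix (Fin n) (Fin n) ℂ) :
    NormedSpace.exp (((2 : ℂ) * Real.pi * Complex.I) • T) = 1 ↔
      Module.End.IsSemisimple (Matrix.mulVecLin T) ∧
        ∀ μ : ℂ, Module.End.HasEigenvalue (Matrix.mulVecLin T) μ → ∃ k : ℤ, μ = (k : ℂ) := by
  set c : ℂ := (2 : ℂ) * Real.pi * Complex.I with hc
  have hc0 : c ≠ 0 := by
    simp only [hc]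
    exact Complex.two_pi_I_ne_zero
  constructor
  · intro h
    -- eigenvalue part
    have heig : ∀ μ : ℂ, Module.End.HasEigenvalue (Matrix.mulVecLin T) μ →
        ∃ k : ℤ, μ = (k : ℂ) := by
      intro μ hμ
      obtain ⟨v, hv⟩ := hμ.exists_hasEigenvector
      have hv1 : T *ᵥ v = μ • v := by
        have := Module.End.mem_eigenspace_iff.mp hv.1
        simpa [Matrix.mulVecLin_apply] using this
      have hv2 : (c • T) *ᵥ v = (c * μ) • v := by
        rw [Matrix.smul_mulVec, hv1, smul_smul]
      have := aux_exp_mulVec (c • T) v (c * μ) hv2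
      rw [h, Matrix.one_mulVec] at this
      have hexp : Complex.exp (c * μ) = 1 := by
        by_contra hne
        have : (Complex.exp (c * μ) - 1) • v = 0 := by
          rw [sub_smul, one_smul, ← this, sub_self]
        rcases smul_eq_zero.mp this with h' | h'
        · exact hne (by linear_combination h')
        · exact hv.2 h'
      obtain ⟨k, hk⟩ := Complex.exp_eq_one_iff.mp hexp
      refine ⟨k, mul_left_cancel₀ hc0 ?_⟩
      rw [hk, hc]; ring
    refine ⟨?_, heig⟩
    -- semisimplicity via Jordan–Chevalley
    obtain ⟨N', hN'mem, S', hS'mem, hN'nil, hS'ss, hsplit⟩ :=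
      Module.End.exists_isNilpotent_isSemisimple (f := Matrix.mulVecLin T)
    -- N' and S' commute
    have hcomm' : Commute N' S' := by
      rw [Algebra.adjoin_singleton_eq_range_aeval] at hN'mem hS'mem
      obtain ⟨p, hp⟩ := hN'mem
      obtain ⟨q, hq⟩ := hS'mem
      rw [← hp, ← hq]
      show _ * _ = _ * _
      rw [← _root_.map_mul, ← _root_.map_mul, mul_comm]
    -- transfer to matrices
    have hmv : ∀ M : Matrix (Fin n) (Fin n) ℂ, Matrix.mulVecLin M = Matrix.toLinAlgEquiv' M :=
      fun M => LinearMap.ext fun v => by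
        rw [Matrix.mulVecLin_apply, Matrix.toLinAlgEquiv'_apply]
    set N : Matrix (Fin n) (Fin n) ℂ := LinearMap.toMatrixAlgEquiv' N' with hN
    set S : Matrix (Fin n) (Fin n) ℂ := LinearMap.toMatrixAlgEquiv' S' with hS
    have hmvN : Matrix.mulVecLin N = N' := by
      rw [hmv]; exact Matrix.toLinAlgEquiv'_toMatrixAlgEquiv' N'
    have hmvS : Matrix.mulVecLin S = S' := by
      rw [hmv]; exact Matrix.toLinAlgEquiv'_toMatrixAlgEquiv' S'
    have hTNS : T = N + S := by
      have h0 := congrArg LinearMap.toMatrixAlgEquiv' hsplit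
      rwa [hmv T, LinearMap.toMatrixAlgEquiv'_toLinAlgEquiv', map_add] at h0
    have hcommNS : Commute N S := hcomm'.map (LinearMap.toMatrixAlgEquiv' : _ ≃ₐ[ℂ] _)
    have hNnil : IsNilpotent N := hN'nil.map (LinearMap.toMatrixAlgEquiv' : _ ≃ₐ[ℂ] _)
    have hcN : IsNilpotent (c • N) := hNnil.smul c
    have hcSN : Commute (c • S) (c • N) := ((hcommNS.symm).smul_left c).smul_right c
    have h1 : NormedSpace.exp (c • S) * NormedSpace.exp (c • N) = 1 := by
      rw [← Matrix.exp_add_of_commute _ _ hcSN, ← smul_add, add_comm S N, ← hTNS]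
      exact h
    -- diagonalize S
    obtain ⟨b, d, hb⟩ := aux_eigenbasis S' hS'ss
    have hb' : ∀ i, Matrix.mulVecLin S (b i) = d i • b i := by
      intro i; rw [hmvS]; exact hb i
    obtain ⟨P, hP⟩ := aux_conj S b d hb'
    have hEdec : NormedSpace.exp (c • S) =
        (P : Matrix (Fin n) (Fin n) ℂ) * Matrix.diagonal (fun i => Complex.exp (c * d i)) *
          ((P⁻¹ : (Matrix (Fin n) (Fin n) ℂ)ˣ) : Matrix (Fin n) (Fin n) ℂ) := by
      rw [hP] at *
      exact aux_exp_conj_diag c P d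
    set E := NormedSpace.exp (c • S) with hE
    set U := NormedSpace.exp (c • N) with hU
    set e : Fin n → ℂ := fun i => Complex.exp (c * d i) with he
    have hUnil : IsNilpotent (U - 1) := aux_exp_sub_one_isNilpotent _ hcN
    have hEU : Commute E U := by
      show E * U = U * E
      rw [hE, hU, ← Matrix.exp_add_of_commute _ _ hcSN,
        ← Matrix.exp_add_of_commute _ _ hcSN.symm, add_comm]
    have hE1nil : IsNilpotent (E - 1) := by
      have heq : E - 1 = -(E * (U - 1)) := by
        rw [mul_sub, mul_one, h1, neg_sub]
      rw [heq]
      exact ((hEU.sub_right (Commute.one_right E)).isNilpotent_mul_left hUnil).neg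
    have hdiagnil : IsNilpotent (Matrix.diagonal e - 1) := by
      have heq : Matrix.diagonal e - 1 =
          ((P⁻¹ : (Matrix (Fin n) (Fin n) ℂ)ˣ) : Matrix (Fin n) (Fin n) ℂ) * (E - 1) *
            (P : Matrix (Fin n) (Fin n) ℂ) := by
        rw [hEdec]
        have expand : ((P⁻¹ : (Matrix (Fin n) (Fin n) ℂ)ˣ) : Matrix (Fin n) (Fin n) ℂ) *
            ((P : Matrix (Fin n) (Fin n) ℂ) * Matrix.diagonal e *
              ((P⁻¹ : (Matrix (Fin n) (Fin n) ℂ)ˣ) : Matrix (Fin n) (Fin n) ℂ) - 1) *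
            (P : Matrix (Fin n) (Fin n) ℂ) =
            (((P⁻¹ : (Matrix (Fin n) (Fin n) ℂ)ˣ) : Matrix (Fin n) (Fin n) ℂ) *
              (P : Matrix (Fin n) (Fin n) ℂ)) * Matrix.diagonal e *
            (((P⁻¹ : (Matrix (Fin n) (Fin n) ℂ)ˣ) : Matrix (Fin n) (Fin n) ℂ) *
              (P : Matrix (Fin n) (Fin n) ℂ)) -
            ((P⁻¹ : (Matrix (Fin n) (Fin n) ℂ)ˣ) : Matrix (Fin n) (Fin n) ℂ) *
              (P : Matrix (Fin n) (Fin n) ℂ) := by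
          noncomm_ring
        rw [expand, Units.inv_mul, one_mul, mul_one]
      rw [heq]
      exact aux_conj_nilpotent P (E - 1) hE1nil
    have hone : ∀ i, e i = 1 := by
      have h2 : Matrix.diagonal e - 1 = Matrix.diagonal (fun i => e i - 1) := by
        rw [← Matrix.diagonal_one, Matrix.diagonal_sub]
      rw [h2] at hdiagnil
      intro i
      have := aux_diag_nilpotent _ hdiagnil i
      exact sub_eq_zero.mp this
    have hEone : E = 1 := by
      rw [hEdec, show e = fun _ => (1 : ℂ) from funext hone, Matrix.diagonal_one, mul_one,
        Units.mul_inv]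
    have hUone : U = 1 := by
      rw [hEone, one_mul] at h1
      exact h1
    have hNzero : N = 0 := by
      have := aux_nilpotent_exp_eq_one _ hcN hUone
      rcases smul_eq_zero.mp this with h' | h'
      · exact absurd h' hc0
      · exact h'
    have hN'zero : N' = 0 := by
      rw [← hmvN, hNzero]
      exact Matrix.mulVecLin_zero
    rw [hsplit, hN'zero, zero_add]
    exact hS'ss
  · rintro ⟨hss, hint⟩
    obtain ⟨b, d, hb⟩ := aux_eigenbasis (Matrix.mulVecLin T) hss
    have hd : ∀ i, ∃ k : ℤ, d i = (k : ℂ) := by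
      intro i
      refine hint (d i) (Module.End.hasEigenvalue_of_hasEigenvector
        ⟨Module.End.mem_eigenspace_iff.mpr (hb i), b.ne_zero i⟩)
    obtain ⟨P, hP⟩ := aux_conj T b d hb
    rw [hP, aux_exp_conj_diag]
    have : (fun i => Complex.exp (c * d i)) = fun _ => 1 := by
      funext i
      obtain ⟨k, hk⟩ := hd i
      rw [hk]
      rw [show c * (k : ℂ) = (k : ℤ) * (2 * Real.pi * Complex.I) by rw [hc]; ring]
      exact Complex.exp_int_mul_two_pi_mul_I k
    rw [this, Matrix.diagonal_one, mul_one, P.mul_inv]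
end

section
/- Let T ⊆ h be an additive subgroup on which B vanishes identically (B(s,t) = 0 for all s,t ∈ T). Let P be a locally finite h-module with action ρ, and let E : T → GL(P) be a group homomorphism (E_0 = id, E_{s+t} = E_s ∘ E_t) such that ρ(z)∘E_t − E_t∘ρ(z) = B(t,z)·E_t for all t ∈ T and z ∈ h. Then the only h-submodule of P contained in the subspace Σ_{t ∈ T} (id − E_t)(P) is the zero subspace. -/
open scoped DirectSum

section Aux

variable {P : Type*} [AddCommGroup P] [Module ℂ P]

private lemma pow_apply_mem (A : Module.End ℂ P) (R : Submodule ℂ P)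
    (hR : ∀ x ∈ R, A x ∈ R) :
    ∀ (n : ℕ) (x : P), x ∈ R → (A ^ n) x ∈ R := by
  intro n
  induction n with
  | zero => intro x hx; simpa using hx
  | succ n ih =>
    intro x hx
    rw [pow_succ, Module.End.mul_apply]
    exact ih _ (hR x hx)

private lemma aeval_apply_mem (A : Module.End ℂ P) (R : Submodule ℂ P)
    (hR : ∀ x ∈ R, A x ∈ R) (f : Polynomial ℂ) (x : P) (hx : x ∈ R) :
    (Polynomial.aeval A f) x ∈ R := by
  induction f using Polynomial.induction_on' with
  | add p q hp hq =>
    rw [map_add, LinearMap.add_apply]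
    exact R.add_mem hp hq
  | monomial n a =>
    rw [Polynomial.aeval_monomial, Module.End.mul_apply, Module.algebraMap_end_apply]
    exact R.smul_mem _ (pow_apply_mem A R hR n x hx)

private lemma deg_zero_case (A : Module.End ℂ P) (f : Polynomial ℂ) (hf0 : f ≠ 0)
    (hdeg : f.natDegree = 0) (x : P) (hfx : (Polynomial.aeval A f) x = 0) : x = 0 := by
  obtain ⟨a, rfl⟩ := Polynomial.natDegree_eq_zero.mp hdeg
  rw [Polynomial.aeval_C, Module.algebraMap_end_apply] at hfx
  have ha : a ≠ 0 := fun h => hf0 (by rw [h, map_zero])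
  rcases smul_eq_zero.mp hfx with h | h
  · exact absurd h ha
  · exact h

private lemma mem_iSup_maxGen (A : Module.End ℂ P) (R : Submodule ℂ P)
    (hR : ∀ x ∈ R, A x ∈ R) :
    ∀ (n : ℕ) (f : Polynomial ℂ), f.natDegree ≤ n → f ≠ 0 → ∀ x ∈ R,
      (Polynomial.aeval A f) x = 0 →
      x ∈ ⨆ c : ℂ, (A.maxGenEigenspace c ⊓ R) := by
  intro n
  induction n with
  | zero =>
    intro f hdeg hf0 x hxR hfx
    have : x = 0 := deg_zero_case A f hf0 (Nat.le_zero.mp hdeg) x hfx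
    rw [this]; exact zero_mem _
  | succ n ih =>
    intro f hdeg hf0 x hxR hfx
    by_cases hdeg0 : f.natDegree = 0
    · have : x = 0 := deg_zero_case A f hf0 hdeg0 x hfx
      rw [this]; exact zero_mem _
    · have hdpos : 0 < f.natDegree := Nat.pos_of_ne_zero hdeg0
      have hdne : f.degree ≠ 0 := (Polynomial.natDegree_pos_iff_degree_pos.mp hdpos).ne'
      obtain ⟨c, hc⟩ := IsAlgClosed.exists_root f hdne
      set m := Polynomial.rootMultiplicity c f with hm
      have hmpos : 0 < m := (Polynomial.rootMultiplicity_pos hf0).mpr hc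
      set g := f /ₘ ((Polynomial.X - Polynomial.C c) ^ m) with hg
      have hfac : (Polynomial.X - Polynomial.C c) ^ m * g = f :=
        Polynomial.pow_mul_divByMonic_rootMultiplicity_eq f c
      have hgc : Polynomial.eval c g ≠ 0 :=
        Polynomial.eval_divByMonic_pow_rootMultiplicity_ne_zero c hf0
      have hg0 : g ≠ 0 := by rintro h; rw [h] at hgc; simp at hgc
      have hXc0 : ((Polynomial.X - Polynomial.C c : Polynomial ℂ)) ^ m ≠ 0 :=
        pow_ne_zero _ (Polynomial.X_sub_C_ne_zero c)
      have hdegs : f.natDegree = m + g.natDegree := by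
        conv_lhs => rw [← hfac]
        rw [Polynomial.natDegree_mul hXc0 hg0, Polynomial.natDegree_pow,
          Polynomial.natDegree_X_sub_C, mul_one]
      have hglt : g.natDegree ≤ n := by omega
      have hcop : IsCoprime ((Polynomial.X - Polynomial.C c : Polynomial ℂ) ^ m) g := by
        apply IsCoprime.pow_left
        refine (Polynomial.irreducible_X_sub_C c).coprime_iff_not_dvd.mpr ?_
        intro hdvd
        exact hgc (Polynomial.dvd_iff_isRoot.mp hdvd)
      obtain ⟨a, b, hab⟩ := hcop
      have hx1 : (Polynomial.aeval A (a * (Polynomial.X - Polynomial.C c) ^ m)) x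
          + (Polynomial.aeval A (b * g)) x = x := by
        rw [← LinearMap.add_apply, ← map_add, hab, map_one, Module.End.one_apply]
      set w := (Polynomial.aeval A (b * g)) x with hw
      have hwR : w ∈ R := aeval_apply_mem A R hR _ x hxR
      have hwmax : w ∈ A.maxGenEigenspace c := by
        rw [Module.End.mem_maxGenEigenspace]
        refine ⟨m, ?_⟩
        have h1 : ((A - c • (1 : Module.End ℂ P)) ^ m)
            = Polynomial.aeval A ((Polynomial.X - Polynomial.C c) ^ m) := by
          rw [map_pow, map_sub, Polynomial.aeval_X, Polynomial.aeval_C,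
            Algebra.algebraMap_eq_smul_one]
        rw [h1, hw, ← Module.End.mul_apply, ← map_mul]
        have h2 : (Polynomial.X - Polynomial.C c) ^ m * (b * g) = b * f := by
          rw [← hfac]; ring
        rw [h2, map_mul, Module.End.mul_apply, hfx, map_zero]
      set y := (Polynomial.aeval A (a * (Polynomial.X - Polynomial.C c) ^ m)) x with hy
      have hyR : y ∈ R := aeval_apply_mem A R hR _ x hxR
      have hgy : (Polynomial.aeval A g) y = 0 := by
        rw [hy, ← Module.End.mul_apply, ← map_mul]
        have h2 : g * (a * (Polynomial.X - Polynomial.C c) ^ m) = a * f := by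
          rw [← hfac]; ring
        rw [h2, map_mul, Module.End.mul_apply, hfx, map_zero]
      have hyS : y ∈ ⨆ c : ℂ, (A.maxGenEigenspace c ⊓ R) := ih g hglt hg0 y hyR hgy
      have hwS : w ∈ ⨆ c : ℂ, (A.maxGenEigenspace c ⊓ R) :=
        Submodule.mem_iSup_of_mem c ⟨hwmax, hwR⟩
      rw [← hx1]
      exact add_mem hyS hwS

private lemma nilp_add (A B : Module.End ℂ P) (hAB : Commute A B) (x : P) (m n : ℕ)
    (hA : (A ^ m) x = 0) (hB : (B ^ n) x = 0) : ((A + B) ^ (m + n)) x = 0 := by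
  rw [hAB.add_pow, LinearMap.sum_apply]
  apply Finset.sum_eq_zero
  intro k hk
  rw [Finset.mem_range] at hk
  rw [Module.End.mul_apply, Module.End.natCast_apply, map_nsmul]
  by_cases hkm : m ≤ k
  · rw [(hAB.pow_pow k (m + n - k)).eq, Module.End.mul_apply]
    have : (A ^ k) x = 0 := by
      rw [← Nat.sub_add_cancel hkm, pow_add, Module.End.mul_apply, hA, map_zero]
    rw [this, map_zero, smul_zero]
  · have hn : n ≤ m + n - k := by omega
    rw [Module.End.mul_apply]
    have : (B ^ (m + n - k)) x = 0 := by
      rw [← Nat.sub_add_cancel hn, pow_add, Module.End.mul_apply, hB, map_zero]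
    rw [this, map_zero, smul_zero]

private lemma nilp_sum {ι : Type*} [DecidableEq ι] (s : Finset ι) (D : ι → Module.End ℂ P)
    (hc : ∀ i ∈ s, ∀ j ∈ s, Commute (D i) (D j)) (x : P)
    (hD : ∀ i ∈ s, ∃ n, ((D i) ^ n) x = 0) :
    ∃ N, ((∑ i ∈ s, D i) ^ N) x = 0 := by
  induction s using Finset.induction_on with
  | empty => exact ⟨1, by simp⟩
  | @insert j s' hj ih =>
    obtain ⟨m, hm⟩ := hD j (Finset.mem_insert_self j s')
    obtain ⟨N, hN⟩ := ih
      (fun i hi j' hj' => hc i (Finset.mem_insert_of_mem hi) j' (Finset.mem_insert_of_mem hj'))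
      (fun i hi => hD i (Finset.mem_insert_of_mem hi))
    have hcomm : Commute (D j) (∑ i ∈ s', D i) :=
      Commute.sum_right s' _ _ (fun i hi =>
        hc j (Finset.mem_insert_self j s') i (Finset.mem_insert_of_mem hi))
    rw [Finset.sum_insert hj]
    exact ⟨m + N, nilp_add (D j) (∑ i ∈ s', D i) hcomm x m N hm hN⟩

private lemma exists_sep {h : Type*} [AddCommGroup h] [Module ℂ h]
    (s : Finset (h →ₗ[ℂ] ℂ)) (hs : ∀ g ∈ s, g ≠ 0) : ∃ z : h, ∀ g ∈ s, g z ≠ 0 := by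
  classical
  induction s using Finset.induction_on with
  | empty => exact ⟨0, by simp⟩
  | @insert g s' hgs ih =>
    obtain ⟨z, hz⟩ := ih (fun g' hg' => hs g' (Finset.mem_insert_of_mem hg'))
    have hg : g ≠ 0 := hs g (Finset.mem_insert_self g s')
    obtain ⟨y, hy⟩ : ∃ y, g y ≠ 0 := by
      by_contra hcon
      push_neg at hcon
      exact hg (LinearMap.ext fun y => by simp [hcon y])
    obtain ⟨c, hcF⟩ := Infinite.exists_notMem_finset
      ((insert g s').image fun g' => -(g' z / g' y))
    refine ⟨z + c • y, ?_⟩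
    intro g' hg'
    rw [map_add, map_smul, smul_eq_mul]
    by_cases hy' : g' y = 0
    · rcases Finset.mem_insert.mp hg' with rfl | hmem
      · exact absurd hy' hy
      · rw [hy', mul_zero, add_zero]
        exact hz g' hmem
    · intro hzero
      apply hcF
      rw [Finset.mem_image]
      refine ⟨g', hg', ?_⟩
      have h1 : g' z = -c * g' y := by linear_combination hzero
      rw [h1, mul_div_assoc, div_self hy', mul_one, neg_neg]

variable {h : Type*} [AddCommGroup h] [Module ℂ h]

/-- The generalized weight space of `P` for the weight `μ`. -/
private def wtSpace (ρ : h →ₗ[ℂ] Module.End ℂ P) (μ : h →ₗ[ℂ] ℂ) : Submodule ℂ P :=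
  ⨅ z : h, (ρ z).maxGenEigenspace (μ z)

private lemma mem_wtSpace {ρ : h →ₗ[ℂ] Module.End ℂ P} {μ : h →ₗ[ℂ] ℂ} {x : P} :
    x ∈ wtSpace ρ μ ↔ ∀ z : h, x ∈ (ρ z).maxGenEigenspace (μ z) :=
  Submodule.mem_iInf _
private lemma mem_iSup_wtSpace [FiniteDimensional ℂ h]
    (ρ : h →ₗ[ℂ] Module.End ℂ P)
    (hcomm : ∀ y z : h, Commute (ρ y) (ρ z))
    (hlf : ∀ (y : h) (p : P), ∃ f : Polynomial ℂ, f ≠ 0 ∧ (Polynomial.aeval (ρ y) f) p = 0)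
    (R : Submodule ℂ P) (hR : ∀ z : h, ∀ x ∈ R, ρ z x ∈ R) :
    ∀ q ∈ R, q ∈ ⨆ μ : h →ₗ[ℂ] ℂ, (wtSpace ρ μ ⊓ R) := by
  classical
  set d := Module.finrank ℂ h with hd
  set bb := Module.finBasis ℂ h with hbb
  set J : ℕ → (Fin d → ℂ) → Submodule ℂ P :=
    fun k μ => ⨅ (i : Fin d) (_ : (i : ℕ) < k), (ρ (bb i)).maxGenEigenspace (μ i) with hJ
  have step : ∀ k : ℕ, k ≤ d → ∀ q ∈ R, q ∈ ⨆ μ : Fin d → ℂ, (J k μ ⊓ R) := by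
    intro k
    induction k with
    | zero =>
      intro _ q hq
      apply Submodule.mem_iSup_of_mem (fun _ => (0 : ℂ))
      refine ⟨?_, hq⟩
      rw [hJ]
      exact (Submodule.mem_iInf _).mpr fun i =>
        (Submodule.mem_iInf _).mpr fun hi => absurd hi (Nat.not_lt_zero _)
    | succ k ih =>
      intro hk q hq
      have hk' : k ≤ d := Nat.le_of_succ_le hk
      have hklt : k < d := hk
      have hq' := ih hk' q hq
      set i0 : Fin d := ⟨k, hklt⟩ with hi0
      have memJ : ∀ (k' : ℕ) (μ : Fin d → ℂ) (x : P), x ∈ J k' μ ↔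
          ∀ i : Fin d, (i : ℕ) < k' → x ∈ (ρ (bb i)).maxGenEigenspace (μ i) := by
        intro k' μ x
        rw [hJ]
        constructor
        · intro hx i hi
          exact (Submodule.mem_iInf _).mp ((Submodule.mem_iInf _).mp hx i) hi
        · intro hx
          exact (Submodule.mem_iInf _).mpr fun i =>
            (Submodule.mem_iInf _).mpr fun hi => hx i hi
      have main : ∀ μ : Fin d → ℂ, (J k μ ⊓ R) ≤ ⨆ μ' : Fin d → ℂ, (J (k+1) μ' ⊓ R) := by
        intro μ x hx
        have hstab : ∀ y ∈ (J k μ ⊓ R), (ρ (bb i0)) y ∈ (J k μ ⊓ R) := by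
          rintro y ⟨hyJ, hyR⟩
          refine ⟨?_, hR _ y hyR⟩
          have hyJ' := (memJ k μ y).mp hyJ
          exact (memJ k μ _).mpr fun i hi =>
            Module.End.mapsTo_maxGenEigenspace_of_comm
              (hcomm (bb i) (bb i0)) (μ i) (hyJ' i hi)
        obtain ⟨f, hf0, hfx⟩ := hlf (bb i0) x
        have hdec := mem_iSup_maxGen (ρ (bb i0)) (J k μ ⊓ R) hstab f.natDegree f
          le_rfl hf0 x hx hfx
        have hsub : (⨆ c : ℂ, ((ρ (bb i0)).maxGenEigenspace c ⊓ (J k μ ⊓ R)))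
            ≤ ⨆ μ' : Fin d → ℂ, (J (k+1) μ' ⊓ R) := by
          apply iSup_le
          intro c y hy
          obtain ⟨hymax, hyJ, hyR⟩ := hy
          apply Submodule.mem_iSup_of_mem (Function.update μ i0 c)
          refine ⟨?_, hyR⟩
          refine (memJ _ _ _).mpr fun i hi => ?_
          rcases Nat.lt_succ_iff_lt_or_eq.mp hi with hik | hik
          · have hne : i ≠ i0 := by
              intro hcontr
              rw [hcontr, hi0] at hik
              exact absurd hik (lt_irrefl k)
            rw [Function.update_of_ne hne]
            exact (memJ k μ y).mp hyJ i hik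
          · have hii : i = i0 := Fin.ext hik
            subst hii
            rw [Function.update_self]
            exact hymax
        exact hsub hdec
      have hle : (⨆ μ : Fin d → ℂ, (J k μ ⊓ R)) ≤ ⨆ μ' : Fin d → ℂ, (J (k+1) μ' ⊓ R) :=
        iSup_le main
      exact hle hq'
  intro q hq
  have hq' := step d le_rfl q hq
  have hle : (⨆ μ : Fin d → ℂ, (J d μ ⊓ R)) ≤ ⨆ μ : h →ₗ[ℂ] ℂ, (wtSpace ρ μ ⊓ R) := by
    apply iSup_le
    intro μ x hx
    obtain ⟨hxJ, hxR⟩ := hx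
    apply Submodule.mem_iSup_of_mem (Module.Basis.constr bb ℂ μ)
    refine ⟨?_, hxR⟩
    refine mem_wtSpace.mpr fun z => ?_
    rw [Module.End.mem_maxGenEigenspace]
    have hz : ∑ i, (bb.repr z) i • bb i = z := Module.Basis.sum_repr bb z
    have hν : (Module.Basis.constr bb ℂ μ) z = ∑ i, (bb.repr z) i * μ i := by
      conv_lhs => rw [← hz]
      rw [map_sum]
      refine Finset.sum_congr rfl fun i _ => ?_
      rw [map_smul, Module.Basis.constr_basis, smul_eq_mul]
    have hop : ρ z - ((Module.Basis.constr bb ℂ μ) z) • (1 : Module.End ℂ P)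
        = ∑ i, (bb.repr z) i • (ρ (bb i) - (μ i) • (1 : Module.End ℂ P)) := by
      have h1 : ρ z = ∑ i, (bb.repr z) i • ρ (bb i) := by
        conv_lhs => rw [← hz]
        rw [map_sum]
        refine Finset.sum_congr rfl fun i _ => ?_
        rw [map_smul]
      rw [h1, hν, Finset.sum_smul, ← Finset.sum_sub_distrib]
      refine Finset.sum_congr rfl fun i _ => ?_
      rw [smul_sub, smul_smul]
    set D : Fin d → Module.End ℂ P :=
      fun i => (bb.repr z) i • (ρ (bb i) - (μ i) • (1 : Module.End ℂ P)) with hD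
    have hcomm2 : ∀ i ∈ Finset.univ, ∀ j ∈ (Finset.univ : Finset (Fin d)),
        Commute (D i) (D j) := by
      intro i _ j _
      rw [hD]
      apply Commute.smul_left
      apply Commute.smul_right
      have hST := hcomm (bb i) (bb j)
      have c1T : Commute ((μ i) • (1 : Module.End ℂ P)) (ρ (bb j)) :=
        (Commute.one_left _).smul_left _
      have cS1 : Commute (ρ (bb i)) ((μ j) • (1 : Module.End ℂ P)) :=
        (Commute.one_right _).smul_right _
      have c11 : Commute ((μ i) • (1 : Module.End ℂ P)) ((μ j) • (1 : Module.End ℂ P)) :=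
        (((Commute.refl 1).smul_left _).smul_right _)
      exact (hST.sub_left c1T).sub_right (cS1.sub_left c11)
    have hnil : ∀ i ∈ (Finset.univ : Finset (Fin d)), ∃ n, ((D i) ^ n) x = 0 := by
      intro i _
      have hx_i : x ∈ (ρ (bb i)).maxGenEigenspace (μ i) := by
        rw [hJ] at hxJ
        exact (Submodule.mem_iInf _).mp ((Submodule.mem_iInf _).mp hxJ i) i.isLt
      obtain ⟨n, hn⟩ := (Module.End.mem_maxGenEigenspace _ _ _).mp hx_i
      refine ⟨n, ?_⟩
      rw [hD, smul_pow, LinearMap.smul_apply, hn, smul_zero]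
    obtain ⟨N, hN⟩ := nilp_sum Finset.univ D hcomm2 x hnil
    refine ⟨N, ?_⟩
    rw [hop]
    exact hN
  exact hle hq'

private lemma wtSpace_indep (ρ : h →ₗ[ℂ] Module.End ℂ P) :
    iSupIndep (fun μ : h →ₗ[ℂ] ℂ => wtSpace ρ μ) := by
  classical
  intro μ
  rw [Submodule.disjoint_def]
  intro x hxμ hxrest
  rw [Submodule.mem_iSup_iff_exists_finsupp] at hxrest
  obtain ⟨g, hg, hgsum⟩ := hxrest
  have hgν : ∀ ν, ν ≠ μ → g ν ∈ wtSpace ρ ν := by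
    intro ν hν
    have := hg ν
    rwa [iSup_pos hν] at this
  have hgμ : g μ = 0 := by
    have := hg μ
    rw [iSup_neg (by simp)] at this
    simpa using this
  set s := (g.support.filter (fun ν => ν ≠ μ)).image (fun ν => ν - μ) with hs
  have hs0 : ∀ g' ∈ s, g' ≠ 0 := by
    intro g' hg'
    rw [hs, Finset.mem_image] at hg'
    obtain ⟨ν, hν, rfl⟩ := hg'
    rw [Finset.mem_filter] at hν
    exact sub_ne_zero.mpr hν.2
  obtain ⟨z, hzsep⟩ := exists_sep s hs0
  have hxmax : x ∈ (ρ z).maxGenEigenspace (μ z) := mem_wtSpace.mp hxμ z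
  have hsum : x ∈ ⨆ c : ℂ, ⨆ (_ : c ≠ μ z), (ρ z).maxGenEigenspace c := by
    rw [← hgsum]
    apply Submodule.sum_mem
    intro ν hν
    by_cases hνμ : ν = μ
    · rw [hνμ, hgμ]
      exact zero_mem _
    · have h1 : g ν ∈ (ρ z).maxGenEigenspace (ν z) := mem_wtSpace.mp (hgν ν hνμ) z
      have h2 : ν z ≠ μ z := by
        have hmem : ν - μ ∈ s := by
          rw [hs]
          exact Finset.mem_image_of_mem _ (Finset.mem_filter.mpr ⟨hν, hνμ⟩)
        have := hzsep (ν - μ) hmem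
        rw [LinearMap.sub_apply] at this
        exact fun hcontra => this (by rw [hcontra, sub_self])
      exact Submodule.mem_iSup_of_mem (ν z) (Submodule.mem_iSup_of_mem h2 h1)
  have hdisj := (Module.End.independent_maxGenEigenspace (ρ z)) (μ z)
  exact (Submodule.disjoint_def.mp hdisj) x hxmax hsum
end Aux

/-- Let `T ⊆ h` be a subgroup on which `B` vanishes, `P` a locally finite `h`-module, and
`E : T → GL(P)` a group homomorphism with `ρ(z)∘E_t − E_t∘ρ(z) = B(t,z)·E_t`. Then the only
`h`-submodule of `P` contained in `Σ_{t ∈ T} (id − E_t)(P)` is zero. -/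
theorem submodule_in_coinvariants_kernel_is_zero
    (h : Type*) [AddCommGroup h] [Module ℂ h] [FiniteDimensional ℂ h]
    (B : h →ₗ[ℂ] h →ₗ[ℂ] ℂ)
    (hBsymm : ∀ x y : h, B x y = B y x)
    (hBnd : ∀ x : h, (∀ y : h, B x y = 0) → x = 0)
    (T : AddSubgroup h)
    (hT : ∀ s ∈ T, ∀ t ∈ T, B s t = 0)
    (P : Type*) [AddCommGroup P] [Module ℂ P]
    (ρ : h →ₗ[ℂ] Module.End ℂ P)
    (hcomm : ∀ y z : h, Commute (ρ y) (ρ z))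
    (hlf : ∀ (y : h) (p : P), ∃ f : Polynomial ℂ, f ≠ 0 ∧ (Polynomial.aeval (ρ y) f) p = 0)
    (E : T → (P ≃ₗ[ℂ] P))
    (hE0 : E 0 = LinearEquiv.refl ℂ P)
    (hEadd : ∀ (s t : T) (p : P), E (s + t) p = E s (E t p))
    (hEcom : ∀ (t : T) (z : h) (p : P), ρ z (E t p) - E t (ρ z p) = B (t : h) z • E t p)
    (Q : Submodule ℂ P)
    (hQmod : ∀ z : h, ∀ q ∈ Q, ρ z q ∈ Q)
    (hQle : Q ≤ Submodule.span ℂ {v : P | ∃ (t : T) (p : P), v = p - E t p}) :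
    Q = ⊥ := by
  classical
  by_contra hQne
  obtain ⟨q, hqQ, hq0⟩ := (Submodule.ne_bot_iff Q).mp hQne
  -- the internal weight space decomposition
  have hTop : (⨆ μ : h →ₗ[ℂ] ℂ, wtSpace ρ μ) = ⊤ := by
    rw [eq_top_iff]
    intro p _
    have hmem := mem_iSup_wtSpace ρ hcomm hlf ⊤ (fun z x _ => trivial) p trivial
    have hle : (⨆ μ : h →ₗ[ℂ] ℂ, (wtSpace ρ μ ⊓ (⊤ : Submodule ℂ P)))
        ≤ ⨆ μ : h →ₗ[ℂ] ℂ, wtSpace ρ μ := iSup_mono fun μ => inf_le_left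
    exact hle hmem
  have hInt : DirectSum.IsInternal (fun μ : h →ₗ[ℂ] ℂ => wtSpace ρ μ) :=
    DirectSum.isInternal_submodule_of_iSupIndep_of_iSup_eq_top (wtSpace_indep ρ) hTop
  set e : (⨁ (μ : h →ₗ[ℂ] ℂ), ↥(wtSpace ρ μ)) ≃ₗ[ℂ] P :=
    LinearEquiv.ofBijective (DirectSum.coeLinearMap fun μ : h →ₗ[ℂ] ℂ => wtSpace ρ μ)
      (show Function.Bijective (DirectSum.coeLinearMap fun μ : h →ₗ[ℂ] ℂ => wtSpace ρ μ) from hInt)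
    with he_def
  set π : (h →ₗ[ℂ] ℂ) → (P →ₗ[ℂ] P) := fun μ =>
    (wtSpace ρ μ).subtype ∘ₗ
      ((DirectSum.component ℂ (h →ₗ[ℂ] ℂ) (fun ν => ↥(wtSpace ρ ν)) μ) ∘ₗ
        e.symm.toLinearMap) with hπ_def
  have hesymm : ∀ (ν : h →ₗ[ℂ] ℂ) (x : P) (hx : x ∈ wtSpace ρ ν),
      e.symm x = DirectSum.lof ℂ (h →ₗ[ℂ] ℂ) (fun ν' => ↥(wtSpace ρ ν')) ν ⟨x, hx⟩ := by
    intro ν x hx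
    rw [LinearEquiv.symm_apply_eq, he_def, LinearEquiv.ofBijective_apply,
      DirectSum.lof_eq_of, DirectSum.coeLinearMap_of]
  have hπ1 : ∀ (ν : h →ₗ[ℂ] ℂ) (x : P), x ∈ wtSpace ρ ν → π ν x = x := by
    intro ν x hx
    calc π ν x = ((DirectSum.component ℂ (h →ₗ[ℂ] ℂ) (fun ν' => ↥(wtSpace ρ ν')) ν)
        (e.symm x) : P) := rfl
      _ = x := by rw [hesymm ν x hx, DirectSum.component.lof_self]
  have hπ2 : ∀ (ν μ : h →ₗ[ℂ] ℂ) (x : P), x ∈ wtSpace ρ ν → ν ≠ μ → π μ x = 0 := by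
    intro ν μ x hx hνμ
    calc π μ x = ((DirectSum.component ℂ (h →ₗ[ℂ] ℂ) (fun ν' => ↥(wtSpace ρ ν')) μ)
        (e.symm x) : P) := rfl
      _ = 0 := by
        rw [hesymm ν x hx, DirectSum.component.of, dif_neg hνμ, ZeroMemClass.coe_zero]
  -- E t shifts weight spaces by B t
  have hshiftE : ∀ (t : T) (ν : h →ₗ[ℂ] ℂ) (x : P), x ∈ wtSpace ρ ν →
      E t x ∈ wtSpace ρ (ν + B (t : h)) := by
    intro t ν x hx
    refine mem_wtSpace.mpr fun z => ?_
    have hx_z := mem_wtSpace.mp hx z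
    rw [Module.End.mem_maxGenEigenspace] at hx_z ⊢
    obtain ⟨k, hk⟩ := hx_z
    refine ⟨k, ?_⟩
    have key : ∀ y : P,
        (ρ z - ((ν + B (t : h)) z) • (1 : Module.End ℂ P)) (E t y)
          = E t ((ρ z - (ν z) • (1 : Module.End ℂ P)) y) := by
      intro y
      have hc' : ρ z (E t y) = E t (ρ z y) + B (t : h) z • E t y := by
        have := hEcom t z y
        linear_combination (norm := module) this
      simp only [LinearMap.sub_apply, LinearMap.smul_apply, Module.End.one_apply,
        LinearMap.add_apply, map_sub, map_smul, hc']
      module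
    have hiter : ∀ k : ℕ,
        ((ρ z - ((ν + B (t : h)) z) • (1 : Module.End ℂ P)) ^ k) (E t x)
          = E t (((ρ z - (ν z) • (1 : Module.End ℂ P)) ^ k) x) := by
      intro k
      induction k with
      | zero => simp
      | succ k ih =>
        rw [pow_succ', Module.End.mul_apply, ih, key, ← Module.End.mul_apply, ← pow_succ']
    rw [hiter, hk, map_zero]
  -- π commutes with E t up to shift
  have hπE : ∀ (t : T) (ν : h →ₗ[ℂ] ℂ) (p : P),
      π ν (E t p) = E t (π (ν - B (t : h)) p) := by
    intro t ν p
    have hp : p ∈ ⨆ μ : h →ₗ[ℂ] ℂ, wtSpace ρ μ := hTop ▸ Submodule.mem_top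
    refine Submodule.iSup_induction (fun μ : h →ₗ[ℂ] ℂ => wtSpace ρ μ)
      (motive := fun p => π ν (E t p) = E t (π (ν - B (t : h)) p)) hp ?_ ?_ ?_
    · intro μ x hx
      by_cases hcase : μ + B (t : h) = ν
      · have h1 : E t x ∈ wtSpace ρ ν := hcase ▸ hshiftE t μ x hx
        rw [hπ1 ν _ h1]
        have h2 : ν - B (t : h) = μ := by rw [← hcase, add_sub_cancel_right]
        rw [h2, hπ1 μ x hx]
      · rw [hπ2 (μ + B (t : h)) ν _ (hshiftE t μ x hx) hcase]
        have h2 : μ ≠ ν - B (t : h) := by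
          intro hcon
          exact hcase (by rw [hcon, sub_add_cancel])
        rw [hπ2 μ (ν - B (t : h)) x hx h2, map_zero]
    · simp
    · intro x y hx hy
      simp only [map_add, hx, hy]
  -- decompose q inside Q and pick a nonzero weight component
  have hqdec := mem_iSup_wtSpace ρ hcomm hlf Q hQmod q hqQ
  rw [Submodule.mem_iSup_iff_exists_finsupp] at hqdec
  obtain ⟨g, hgmem, hgsum⟩ := hqdec
  have hex : ∃ ν, g ν ≠ 0 := by
    by_contra hcon
    push_neg at hcon
    apply hq0
    rw [← hgsum]
    have : g = 0 := Finsupp.ext hcon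
    rw [this, Finsupp.sum_zero_index]
  obtain ⟨lam0, hw⟩ := hex
  set w := g lam0 with hwdef
  have hwwt : w ∈ wtSpace ρ lam0 := (hgmem lam0).1
  have hwQ : w ∈ Q := (hgmem lam0).2
  -- expression of w as a combination of p - E t p
  have hwspan := hQle hwQ
  rw [Submodule.mem_span_set'] at hwspan
  obtain ⟨n, coef, gen, hsum⟩ := hwspan
  choose tt pp hgen using fun i => (gen i).2
  set p' : Fin n → P := fun i => coef i • pp i with hp'
  have hwexpr : w = ∑ i, (p' i - E (tt i) (p' i)) := by
    rw [← hsum]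
    refine Finset.sum_congr rfl fun i _ => ?_
    rw [hgen i, hp', smul_sub, map_smul]
  -- support sets
  have hBinj : ∀ u v : T, B ((u : T) : h) = B ((v : T) : h) → u = v := by
    intro u v huv
    have h0 : B ((u : h) - (v : h)) = 0 := by rw [map_sub, huv, sub_self]
    have h1 : ((u : h) - (v : h)) = 0 :=
      hBnd _ (fun y => by rw [h0]; rfl)
    exact Subtype.ext (sub_eq_zero.mp h1)
  set Spt : P → Set T := fun p => {u : T | π (lam0 + B ((u : T) : h)) p ≠ 0} with hSpt_def
  have hSptFin : ∀ p : P, (Spt p).Finite := by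
    intro p
    have hsub : Spt p ⊆ (fun u : T => lam0 + B ((u : T) : h)) ⁻¹'
        {μ : h →ₗ[ℂ] ℂ | (e.symm p) μ ≠ 0} := by
      intro u hu
      simp only [Set.mem_preimage, Set.mem_setOf_eq]
      intro hz
      apply hu
      show ((wtSpace ρ _).subtype) ((DirectSum.component ℂ (h →ₗ[ℂ] ℂ)
        (fun ν => ↥(wtSpace ρ ν)) _) (e.symm p)) = 0
      rw [← DirectSum.apply_eq_component, hz, map_zero]
    have hinj2 : Function.Injective (fun u : T => lam0 + B ((u : T) : h)) := by
      intro u v huv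
      exact hBinj u v (by exact add_left_cancel huv)
    exact ((DFinsupp.finite_support (e.symm p)).preimage hinj2.injOn).subset hsub
  set U : Finset T := insert 0 (Finset.univ.biUnion (fun i : Fin n =>
      (hSptFin (p' i)).toFinset ∪ ((hSptFin (p' i)).toFinset.image (fun u => u + tt i))))
    with hU_def
  -- the averaging operators
  set F : Finset T → (P →ₗ[ℂ] P) := fun V =>
    ∑ u ∈ V, ((E (-u)).toLinearMap ∘ₗ π (lam0 + B ((u : T) : h))) with hF_def
  have hFapp : ∀ (V : Finset T) (p : P),
      F V p = ∑ u ∈ V, (E (-u)) (π (lam0 + B ((u : T) : h)) p) := by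
    intro V p
    rw [hF_def, LinearMap.sum_apply]
    exact Finset.sum_congr rfl fun u _ => rfl
  have hFw : F U w = w := by
    rw [hFapp]
    rw [Finset.sum_eq_single_of_mem (0 : T) (by rw [hU_def]; exact Finset.mem_insert_self _ _)]
    · simp only [ZeroMemClass.coe_zero, map_zero, add_zero, neg_zero, hE0,
        hπ1 lam0 w hwwt, LinearEquiv.refl_apply]
    · intro u _ hune
      have hBne : lam0 ≠ lam0 + B ((u : T) : h) := by
        intro hcon
        have hB0 : B ((u : T) : h) = 0 := (left_eq_add.mp hcon)
        have hu0 : ((u : T) : h) = 0 := hBnd _ (fun y => by rw [hB0]; rfl)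
        exact hune (Subtype.ext hu0)
      rw [hπ2 lam0 _ w hwwt hBne, map_zero]
  have hFE : ∀ (V : Finset T) (t : T) (p : P),
      F V (E t p) = F (V.image (fun u => u - t)) p := by
    intro V t p
    rw [hFapp, hFapp]
    rw [Finset.sum_image (fun a _ b _ hab => sub_left_inj.mp hab)]
    refine Finset.sum_congr rfl fun u _ => ?_
    rw [hπE t (lam0 + B ((u : T) : h)) p, ← hEadd (-u) t]
    have hidx : -u + t = -(u - t) := by abel
    have harg : lam0 + B (((u - t) : T) : h) = lam0 + B ((u : T) : h) - B ((t : T) : h) := by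
      rw [AddSubgroup.coe_sub, map_sub, add_sub_assoc]
    rw [hidx, harg]
  have hFcongr : ∀ (p : P) (V V' : Finset T),
      Spt p ⊆ ↑V → Spt p ⊆ ↑V' → F V p = F V' p := by
    have key : ∀ (p : P) (V V' : Finset T), V ⊆ V' → Spt p ⊆ ↑V → F V' p = F V p := by
      intro p V V' hVV hSptV
      rw [hFapp, hFapp]
      symm
      apply Finset.sum_subset hVV
      intro u _ hnot
      have hz : π (lam0 + B ((u : T) : h)) p = 0 := by
        by_contra hne
        exact hnot (hSptV hne)
      rw [hz, map_zero]
    intro p V V' h1 h2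
    have e1 := key p V (V ∪ V') Finset.subset_union_left h1
    have e2 := key p V' (V ∪ V') Finset.subset_union_right h2
    rw [← e1, e2]
  have hUS : ∀ i : Fin n, Spt (p' i) ⊆ ↑U := by
    intro i u hu
    rw [hU_def]
    apply Finset.mem_insert_of_mem
    exact Finset.mem_biUnion.mpr ⟨i, Finset.mem_univ i,
      Finset.mem_union_left _ ((hSptFin (p' i)).mem_toFinset.mpr hu)⟩
  have hUSshift : ∀ i : Fin n, Spt (p' i) ⊆ ↑(U.image (fun u => u - tt i)) := by
    intro i u hu
    have hmem : u + tt i ∈ U := by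
      rw [hU_def]
      apply Finset.mem_insert_of_mem
      exact Finset.mem_biUnion.mpr ⟨i, Finset.mem_univ i,
        Finset.mem_union_right _ (Finset.mem_image.mpr
          ⟨u, (hSptFin (p' i)).mem_toFinset.mpr hu, rfl⟩)⟩
    exact Finset.mem_coe.mpr (Finset.mem_image.mpr ⟨u + tt i, hmem, add_sub_cancel_right u (tt i)⟩)
  have hzero : F U w = 0 := by
    conv_lhs => rw [hwexpr]
    rw [map_sum]
    apply Finset.sum_eq_zero
    intro i _
    rw [map_sub, hFE U (tt i) (p' i),
      hFcongr (p' i) U (U.image (fun u => u - tt i)) (hUS i) (hUSshift i), sub_self]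
  exact hw (hFw.symm.trans hzero)
end
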